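/- arXiv:2102.07126 — 5 statements merged into one kernel-verified Lean document; each statement's English description precedes it below -/
import Mathlib

section
/- Let G be a noncompact locally compact second countable group and H a noncompact closed subgroup of G. If the pair H ⊆ G has property (T), then every measure-preserving Borel G-action S = (S_g)_{g∈G} on a σ-finite infinite standard measure space (Y, ν) such that the restricted H-action (S_h)_{h∈H} admits no H-invariant measurable subset of positive finite measure, admits no S-Følner sequence. -/
open MeasureTheory Filter Topology Set ENNReal

noncomputable section

section ActionDefs

variable {G X : Type*}

/-- A Borel action of a group `G` on a measurable space `X`. -/
def IsBorelAction [Group G] [MeasurableSpace G] [MeasurableSpace X]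
    (T : G → X → X) : Prop :=
  Measurable (Function.uncurry T) ∧ (∀ x, T 1 x = x) ∧ ∀ g h x, T (g * h) x = T g (T h x)

/-- A measure-preserving Borel action. -/
def IsMPAction [Group G] [MeasurableSpace G] [MeasurableSpace X]
    (μ : Measure X) (T : G → X → X) : Prop :=
  IsBorelAction T ∧ ∀ g, MeasurePreserving (T g) μ μ

/-- A nonsingular Borel action: each `μ ∘ T g` is mutually absolutely continuous with `μ`. -/
def IsNonsingularAction [Group G] [MeasurableSpace G] [MeasurableSpace X]
    (μ : Measure X) (T : G → X → X) : Prop :=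
  IsBorelAction T ∧ ∀ g, μ.map (T g) ≪ μ ∧ μ ≪ μ.map (T g)

/-- An action is of 0-type if `μ (T g A ∩ B) → 0` as `g → ∞` along the cocompact filter,
for all sets `A`, `B` of finite measure. -/
def IsZeroType [Group G] [MeasurableSpace G] [TopologicalSpace G] [MeasurableSpace X]
    (μ : Measure X) (T : G → X → X) : Prop :=
  ∀ A B : Set X, MeasurableSet A → MeasurableSet B → μ A ≠ ∞ → μ B ≠ ∞ →
    Tendsto (fun g : G => μ (T g '' A ∩ B)) (cocompact G) (𝓝 0)

/-- A probability-preserving action is mixing if `μ (T g A ∩ B) → μ A * μ B` as `g → ∞`. -/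
def IsMixingAction [Group G] [MeasurableSpace G] [TopologicalSpace G] [MeasurableSpace X]
    (μ : Measure X) (T : G → X → X) : Prop :=
  ∀ A B : Set X, MeasurableSet A → MeasurableSet B →
    Tendsto (fun g : G => μ (T g '' A ∩ B)) (cocompact G) (𝓝 (μ A * μ B))

/-- A free action: a.e. point has trivial stabilizer. -/
def IsFreeAction [Group G] [MeasurableSpace X] (μ : Measure X) (T : G → X → X) : Prop :=
  ∀ᵐ x ∂μ, ∀ g : G, T g x = x → g = 1

/-- A `T`-Følner sequence of sets of finite positive measure. -/
def IsFolner [Group G] [TopologicalSpace G] [MeasurableSpace X]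
    (μ : Measure X) (T : G → X → X) (A : ℕ → Set X) : Prop :=
  (∀ n, MeasurableSet (A n) ∧ 0 < μ (A n) ∧ μ (A n) ≠ ∞) ∧
    ∀ K : Set G, IsCompact K →
      Tendsto (fun n => ⨆ g ∈ K, μ (symmDiff (T g '' A n) (A n)) / μ (A n)) atTop (𝓝 0)

/-- The restriction of the action to an invariant set `A` is totally dissipative:
there is a measurable subset `W ⊆ A` meeting the orbit of a.e. point of `A` exactly once,
and a.e. point of `A` has compact stabilizer. -/
def IsTotallyDissipativeOn [Group G] [TopologicalSpace G] [MeasurableSpace X]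
    (μ : Measure X) (T : G → X → X) (A : Set X) : Prop :=
  ∃ W : Set X, MeasurableSet W ∧ W ⊆ A ∧
    ∀ᵐ z ∂(μ.restrict A),
      (∃! w, w ∈ W ∧ ∃ g : G, T g z = w) ∧ IsCompact {g : G | T g z = z}

/-- A totally dissipative action. -/
def IsTotallyDissipative [Group G] [TopologicalSpace G] [MeasurableSpace X]
    (μ : Measure X) (T : G → X → X) : Prop :=
  IsTotallyDissipativeOn μ T Set.univ

/-- The restriction of the action to the invariant set `A` is conservative: no invariant
subset of `A` of positive measure on which the action is totally dissipative. -/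
def IsConservativeOn [Group G] [TopologicalSpace G] [MeasurableSpace X]
    (μ : Measure X) (T : G → X → X) (A : Set X) : Prop :=
  ¬ ∃ B : Set X, B ⊆ A ∧ MeasurableSet B ∧ 0 < μ B ∧ (∀ g : G, T g ⁻¹' B = B) ∧
      IsTotallyDissipativeOn μ T B

/-- A conservative action. -/
def IsConservativeAction [Group G] [TopologicalSpace G] [MeasurableSpace X]
    (μ : Measure X) (T : G → X → X) : Prop :=
  IsConservativeOn μ T Set.univ

/-- An ergodic action: every a.e. invariant set is null or conull. -/
def IsErgodicAction [Group G] [MeasurableSpace X] (μ : Measure X) (T : G → X → X) : Prop :=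
  ∀ A : Set X, MeasurableSet A → (∀ g : G, μ (symmDiff (T g '' A) A) = 0) →
    μ A = 0 ∨ μ Aᶜ = 0

/-- A properly ergodic action: ergodic, and the measure is not concentrated on one orbit. -/
def IsProperlyErgodic [Group G] [MeasurableSpace X] (μ : Measure X) (T : G → X → X) : Prop :=
  IsErgodicAction μ T ∧ ¬ ∃ z : X, μ {y | ∃ g : G, T g z = y}ᶜ = 0

/-- A weakly mixing action: the product with every ergodic probability-preserving action
on a standard probability space is ergodic. -/
def IsWeaklyMixingAction [Group G] [MeasurableSpace G] [MeasurableSpace X]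
    (μ : Measure X) (T : G → X → X) : Prop :=
  ∀ (Z : Type) [MeasurableSpace Z] [StandardBorelSpace Z] (κ : Measure Z)
    [IsProbabilityMeasure κ] (R : G → Z → Z),
    IsMPAction κ R → IsErgodicAction κ R →
      IsErgodicAction (μ.prod κ) (fun g p => (T g p.1, R g p.2))

/-- A sharply weak mixing action: properly ergodic, and the product with every ergodic
conservative nonsingular action on a nonatomic standard probability space is either
ergodic or totally dissipative. -/
def IsSharplyWeakMixing [Group G] [MeasurableSpace G] [TopologicalSpace G] [MeasurableSpace X]
    (μ : Measure X) (T : G → X → X) : Prop :=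
  IsProperlyErgodic μ T ∧
    ∀ (Z : Type) [MeasurableSpace Z] [StandardBorelSpace Z] (κ : Measure Z)
      [IsProbabilityMeasure κ] (R : G → Z → Z),
      (∀ z : Z, κ {z} = 0) →
      IsNonsingularAction κ R → IsErgodicAction κ R → IsConservativeAction κ R →
        (IsErgodicAction (μ.prod κ) (fun g p => (T g p.1, R g p.2)) ∨
          IsTotallyDissipative (μ.prod κ) (fun g p => (T g p.1, R g p.2)))

end ActionDefs

/-- A witness for the Haagerup property: a weakly continuous unitary representation of `G`
on a separable complex Hilbert space whose matrix coefficients vanish at infinity and which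
has almost-invariant unit vectors. -/
structure HaagerupWitness (G : Type*) [Group G] [TopologicalSpace G] where
  (E : Type)
  [nacg : NormedAddCommGroup E]
  [ips : InnerProductSpace ℂ E]
  [cs : CompleteSpace E]
  [sct : SecondCountableTopology E]
  (V : G →* (E ≃ₗᵢ[ℂ] E))
  (weak_cont : ∀ ξ η : E, Continuous fun g : G => (inner ℂ (V g ξ) η : ℂ))
  (c0 : ∀ ξ η : E, Tendsto (fun g : G => (inner ℂ (V g ξ) η : ℂ)) (cocompact G) (𝓝 0))
  (almost_inv : ∀ ε : ℝ, 0 < ε → ∀ K : Set G, IsCompact K →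
    ∃ ξ : E, ‖ξ‖ = 1 ∧ ∀ g ∈ K, ‖V g ξ - ξ‖ < ε)

/-- The Haagerup property for a topological group `G`. -/
def HasHaagerupProperty (G : Type*) [Group G] [TopologicalSpace G] : Prop :=
  Nonempty (HaagerupWitness G)

/-- Property (T) for the pair `H ⊆ G`: every weakly continuous unitary representation of `G`
on a separable complex Hilbert space with almost-invariant unit vectors has a nonzero
`H`-invariant vector. -/
def HasPropertyTPair (G : Type*) [Group G] [TopologicalSpace G] (H : Subgroup G) : Prop :=
  ∀ (E : Type) [NormedAddCommGroup E] [InnerProductSpace ℂ E] [CompleteSpace E]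
    [SecondCountableTopology E] (V : G →* (E ≃ₗᵢ[ℂ] E)),
    (∀ ξ η : E, Continuous fun g : G => (inner ℂ (V g ξ) η : ℂ)) →
    (∀ ε : ℝ, 0 < ε → ∀ K : Set G, IsCompact K →
      ∃ ξ : E, ‖ξ‖ = 1 ∧ ∀ g ∈ K, ‖V g ξ - ξ‖ < ε) →
    ∃ η : E, η ≠ 0 ∧ ∀ h ∈ H, V h η = η

/-- The squared Hellinger distance of two measures `α`, `β` with respect to a reference
measure `γ`. -/
def hellingerSq {Y : Type*} [MeasurableSpace Y] (γ α β : Measure Y) : ℝ :=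
  (1 / 2) * ∫ y, (Real.sqrt (α.rnDeriv γ y).toReal - Real.sqrt (β.rnDeriv γ y).toReal) ^ 2 ∂γ

/-- The tail cylinder `𝐁ⁿ = Yⁿ × B n × B (n+1) × ⋯` (with `0`-based indexing): the set of
sequences whose `j`-th coordinate lies in `B j` for every `j ≥ n`. -/
def tailCylinder {Y : Type*} (B : ℕ → Set Y) (n : ℕ) : Set (ℕ → Y) :=
  {x : ℕ → Y | ∀ j, n ≤ j → x j ∈ B j}

open Pointwise in
theorem koopman_continuous' {G : Type*} [Group G] [TopologicalSpace G]
    [IsTopologicalGroup G] [LocallyCompactSpace G] [SecondCountableTopology G]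
    [MeasurableSpace G] [BorelSpace G]
    {E : Type*} [NormedAddCommGroup E] [Module ℂ E] [SecondCountableTopology E]
    (V : G →* (E ≃ₗᵢ[ℂ] E))
    (hmeas : ∀ ξ η : E, Measurable fun g : G => ‖V g ξ - η‖) (ξ : E) :
    Continuous fun g : G => V g ξ := by
  have hVmul : ∀ (a b : G) (x : E), V a (V b x) = V (a * b) x := by
    intro a b x
    rw [map_mul]; rfl
  have key : ∀ ε : ℝ, 0 < ε → {g : G | ‖V g ξ - ξ‖ < ε} ∈ 𝓝 (1 : G) := by
    intro ε hε
    set μH := MeasureTheory.Measure.haar (G := G) with hμH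
    obtain ⟨D, hDc, hDd⟩ := TopologicalSpace.exists_countable_dense E
    set A : E → Set G := fun c => {g | ‖V g⁻¹ ξ - c‖ < ε / 3} with hA
    have hAm : ∀ c, MeasurableSet (A c) := by
      intro c
      have h1 : Measurable fun g : G => ‖V g⁻¹ ξ - c‖ := (hmeas ξ c).comp measurable_inv
      exact h1 measurableSet_Iio
    have hcover : (⋃ c ∈ D, A c) = univ := by
      refine eq_univ_of_forall fun g => ?_
      obtain ⟨c, hcD, hc⟩ := hDd.exists_dist_lt (V g⁻¹ ξ) (by positivity : (0:ℝ) < ε / 3)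
      rw [dist_eq_norm] at hc
      exact mem_biUnion hcD hc
    have hpos : ∃ c ∈ D, 0 < μH (A c) := by
      by_contra hcon
      push_neg at hcon
      have h0 : μH (⋃ c ∈ D, A c) = 0 := by
        refine (measure_biUnion_null_iff hDc).2 fun c hc => ?_
        exact le_antisymm (hcon c hc) zero_le
      rw [hcover] at h0
      exact (isOpen_univ.measure_pos μH ⟨1, trivial⟩).ne' h0
    obtain ⟨c, -, hc⟩ := hpos
    have hsub : A c / A c ⊆ {g : G | ‖V g ξ - ξ‖ < ε} := by
      rintro g hg
      rw [Set.mem_div] at hg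
      obtain ⟨a, ha, b, hb, rfl⟩ := hg
      have h1 : V a⁻¹ (V (a / b) ξ) = V b⁻¹ ξ := by
        rw [hVmul, div_eq_mul_inv, inv_mul_cancel_left]
      have h2 : ‖V (a / b) ξ - ξ‖ = ‖V b⁻¹ ξ - V a⁻¹ ξ‖ := by
        calc ‖V (a / b) ξ - ξ‖ = ‖V a⁻¹ (V (a / b) ξ - ξ)‖ :=
              ((V a⁻¹).norm_map _).symm
          _ = ‖V a⁻¹ (V (a / b) ξ) - V a⁻¹ ξ‖ := by rw [map_sub]
          _ = ‖V b⁻¹ ξ - V a⁻¹ ξ‖ := by rw [h1]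
      have ha' : ‖V a⁻¹ ξ - c‖ < ε / 3 := ha
      have hb' : ‖V b⁻¹ ξ - c‖ < ε / 3 := hb
      have : ‖V b⁻¹ ξ - V a⁻¹ ξ‖ ≤ ‖V b⁻¹ ξ - c‖ + ‖c - V a⁻¹ ξ‖ := by
        have := dist_triangle (V b⁻¹ ξ) c (V a⁻¹ ξ)
        simpa [dist_eq_norm] using this
      rw [norm_sub_rev c] at this
      rw [Set.mem_setOf_eq, h2]
      linarith
    exact mem_of_superset
      (MeasureTheory.Measure.div_mem_nhds_one_of_haar_pos μH (A c) (hAm c) hc) hsub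
  rw [continuous_iff_continuousAt]
  intro g₀
  rw [ContinuousAt, Metric.tendsto_nhds]
  intro ε hε
  have h1 : Tendsto (fun g : G => g₀⁻¹ * g) (𝓝 g₀) (𝓝 1) := by
    have := (continuous_const.mul continuous_id :
      Continuous fun g : G => g₀⁻¹ * g).tendsto g₀
    simpa [Pi.mul_def] using this
  filter_upwards [h1 (key ε hε)] with g hg
  have h3 : dist (V g ξ) (V g₀ ξ) = ‖V (g₀⁻¹ * g) ξ - ξ‖ := by
    rw [dist_eq_norm]
    calc ‖V g ξ - V g₀ ξ‖ = ‖V g₀⁻¹ (V g ξ - V g₀ ξ)‖ := ((V g₀⁻¹).norm_map _).symm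
      _ = ‖V g₀⁻¹ (V g ξ) - V g₀⁻¹ (V g₀ ξ)‖ := by rw [map_sub]
      _ = ‖V (g₀⁻¹ * g) ξ - ξ‖ := by
          rw [hVmul, hVmul, inv_mul_cancel, map_one]; rfl
  rw [h3]
  exact hg


section AuxKoopman

variable {G Y : Type*} [Group G] [MeasurableSpace G] [MeasurableSpace Y]
  {ν : Measure Y} {S : G → Y → Y}

theorem koopman_comp_comp (hS : IsMPAction ν S) (g h : G) (ξ : Lp ℂ 2 ν) :
    Lp.compMeasurePreserving (S g) (hS.2 g) (Lp.compMeasurePreserving (S h) (hS.2 h) ξ) =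
      Lp.compMeasurePreserving (S (h * g)) (hS.2 (h * g)) ξ := by
  apply Lp.ext
  have h1 := Lp.coeFn_compMeasurePreserving
    (Lp.compMeasurePreserving (S h) (hS.2 h) ξ) (hS.2 g)
  have h2 : (⇑(Lp.compMeasurePreserving (S h) (hS.2 h) ξ)) ∘ (S g)
      =ᵐ[ν] (⇑ξ ∘ S h) ∘ S g :=
    (hS.2 g).quasiMeasurePreserving.ae_eq_comp
      (Lp.coeFn_compMeasurePreserving ξ (hS.2 h))
  have h3 : (⇑ξ ∘ S h) ∘ S g = ⇑ξ ∘ S (h * g) := by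
    funext y
    simp only [Function.comp_apply]
    rw [hS.1.2.2]
  refine (h1.trans (h2.trans ?_)).trans (Lp.coeFn_compMeasurePreserving ξ (hS.2 (h * g))).symm
  rw [h3]

theorem koopman_id (hS : IsMPAction ν S) (ξ : Lp ℂ 2 ν) :
    Lp.compMeasurePreserving (S 1) (hS.2 1) ξ = ξ := by
  apply Lp.ext
  refine (Lp.coeFn_compMeasurePreserving ξ (hS.2 1)).trans ?_
  have : ⇑ξ ∘ S 1 = ⇑ξ := by
    funext y; simp only [Function.comp_apply]; rw [hS.1.2.1]
  rw [this]

/-- The Koopman operator of `S g` as a linear isometry equivalence of `L²`. -/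
def koopman (hS : IsMPAction ν S) (g : G) : Lp ℂ 2 ν ≃ₗᵢ[ℂ] Lp ℂ 2 ν :=
  LinearIsometryEquiv.ofSurjective (Lp.compMeasurePreservingₗᵢ ℂ (S g⁻¹) (hS.2 g⁻¹))
    (fun ξ => ⟨Lp.compMeasurePreserving (S g) (hS.2 g) ξ, by
      show Lp.compMeasurePreserving (S g⁻¹) (hS.2 g⁻¹) _ = ξ
      rw [koopman_comp_comp hS g⁻¹ g ξ, show g * g⁻¹ = 1 from mul_inv_cancel g,
        koopman_id hS]⟩)

theorem koopman_apply (hS : IsMPAction ν S) (g : G) (ξ : Lp ℂ 2 ν) :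
    koopman hS g ξ = Lp.compMeasurePreserving (S g⁻¹) (hS.2 g⁻¹) ξ := rfl

theorem koopman_mul (hS : IsMPAction ν S) (g h : G) (ξ : Lp ℂ 2 ν) :
    koopman hS (g * h) ξ = koopman hS g (koopman hS h ξ) := by
  simp only [koopman_apply]
  rw [koopman_comp_comp hS g⁻¹ h⁻¹ ξ]
  congr 1
  rw [mul_inv_rev]


section Meas
variable [MeasurableInv G] [SigmaFinite ν]

theorem koopman_norm_meas (hS : IsMPAction ν S) (ξ η : Lp ℂ 2 ν) :
    Measurable fun g : G => ‖koopman hS g ξ - η‖ := by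
  have hξ : Measurable (⇑ξ) := (Lp.stronglyMeasurable ξ).measurable
  have hη : Measurable (⇑η) := (Lp.stronglyMeasurable η).measurable
  set F : G × Y → ℝ≥0∞ := fun p => (‖ξ (S p.1 p.2) - η p.2‖₊ : ℝ≥0∞) ^ (2 : ℝ) with hFdef
  have hF : Measurable F := by
    apply (ENNReal.continuous_rpow_const.measurable).comp
    exact ((hξ.comp hS.1.1).sub (hη.comp measurable_snd)).nnnorm.coe_nnreal_ennreal
  have hN : Measurable fun g : G => ∫⁻ y, F (g, y) ∂ν := hF.lintegral_prod_right'
  have hkey : ∀ g : G,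
      ‖koopman hS g ξ - η‖ = ((∫⁻ y, F (g⁻¹, y) ∂ν) ^ (1 / (2 : ℝ))).toReal := by
    intro g
    rw [Lp.norm_def]
    have h1 : ⇑(koopman hS g ξ - η) =ᵐ[ν] fun y => ξ (S g⁻¹ y) - η y := by
      filter_upwards [Lp.coeFn_sub (koopman hS g ξ) η,
        Lp.coeFn_compMeasurePreserving ξ (hS.2 g⁻¹)] with y hy1 hy2
      exact hy1.trans (by rw [Pi.sub_apply]; exact congrArg (· - (η : Y → ℂ) y) hy2)
    rw [eLpNorm_congr_ae h1,
      eLpNorm_eq_lintegral_rpow_enorm_toReal two_ne_zero ENNReal.ofNat_ne_top]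
    norm_num [hFdef]
    rfl
  simp only [hkey]
  exact (ENNReal.measurable_toReal.comp
    ((ENNReal.continuous_rpow_const.measurable).comp (hN.comp measurable_inv)))


end Meas

end AuxKoopman

section AuxPhi
variable {Y : Type*} [MeasurableSpace Y] [StandardBorelSpace Y] [Nonempty Y]

theorem exists_L2_transfer (ν : Measure Y) [SigmaFinite ν] :
    ∃ ν' : Measure ℝ, SigmaFinite ν' ∧
      Nonempty (Lp ℂ 2 ν' ≃ₗᵢ[ℂ] Lp ℂ 2 ν) := by
  obtain ⟨f, hf⟩ := exists_measurableEmbedding_real Y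
  refine ⟨ν.map f, hf.sigmaFinite_map, ?_⟩
  have hfp : MeasurePreserving f ν (ν.map f) := ⟨hf.measurable, rfl⟩
  set L := Lp.compMeasurePreservingₗᵢ (E := ℂ) (p := 2) ℂ f hfp with hL
  have hsurj : Function.Surjective L := by
    intro ξ
    obtain ⟨r, hrm, hrf⟩ := hf.exists_measurable_extend
      (measurable_id (α := Y)) (fun _ => ‹Nonempty Y›)
    have hξm : Measurable (⇑ξ) := (Lp.stronglyMeasurable ξ).measurable
    set u : ℝ → ℂ := (⇑ξ) ∘ r with hu
    have hum : Measurable u := hξm.comp hrm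
    have hcomp : u ∘ f = ⇑ξ := by
      rw [hu, Function.comp_assoc, hrf, Function.comp_id]
    have humem : MemLp u 2 (ν.map f) := by
      refine ⟨hum.aestronglyMeasurable, ?_⟩
      rw [eLpNorm_map_measure hum.aestronglyMeasurable hf.measurable.aemeasurable, hcomp]
      exact Lp.eLpNorm_lt_top ξ
    refine ⟨humem.toLp u, ?_⟩
    apply Lp.ext
    have h1 : ⇑(L (humem.toLp u)) =ᵐ[ν] (⇑(humem.toLp u)) ∘ f :=
      Lp.coeFn_compMeasurePreserving _ hfp
    have h2 : (⇑(humem.toLp u)) ∘ f =ᵐ[ν] u ∘ f :=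
      hfp.quasiMeasurePreserving.ae_eq_comp (humem.coeFn_toLp)
    refine (h1.trans (h2.trans ?_))
    rw [hcomp]
  exact ⟨(LinearIsometryEquiv.ofSurjective L hsurj)⟩


end AuxPhi

/-- **Theorem D(i).** If the pair `H ⊆ G` (with `H` a noncompact closed subgroup) has
property (T), then every measure-preserving Borel `G`-action `S` on a σ-finite infinite
standard measure space whose restriction to `H` has no invariant set of positive finite
measure admits no `S`-Følner sequence. -/
theorem propertyT_pair_no_folner {G : Type*} [Group G] [TopologicalSpace G]
    [IsTopologicalGroup G] [LocallyCompactSpace G] [SecondCountableTopology G]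
    [NoncompactSpace G] [MeasurableSpace G] [BorelSpace G]
    (H : Subgroup G) (hHclosed : IsClosed (H : Set G)) (hHnoncompact : ¬ IsCompact (H : Set G))
    (hTpair : HasPropertyTPair G H)
    (Y : Type*) [MeasurableSpace Y] [StandardBorelSpace Y]
    (ν : Measure Y) [SigmaFinite ν] (hinf : ν Set.univ = ∞)
    (S : G → Y → Y) (hS : IsMPAction ν S)
    (hnoinv : ¬ ∃ B : Set Y, MeasurableSet B ∧ 0 < ν B ∧ ν B ≠ ∞ ∧
      ∀ h ∈ H, ν (symmDiff (S h '' B) B) = 0) :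
    ¬ ∃ A : ℕ → Set Y, IsFolner ν S A := by
  rintro ⟨A, hA1, hA2⟩
  -- `Y` is nonempty since `ν` is infinite
  have hYne : Nonempty Y := by
    rcases isEmpty_or_nonempty Y with hE | hN
    · rw [Set.univ_eq_empty_iff.2 hE] at hinf
      simp at hinf
    · exact hN
  haveI : Fact ((2 : ℝ≥0∞) ≠ ∞) := ⟨by norm_num⟩
  obtain ⟨ν', hσ, ⟨Φ⟩⟩ := exists_L2_transfer ν
  haveI := hσ
  -- pointwise facts about the action
  have hpt1 : ∀ y, S 1 y = y := hS.1.2.1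
  have hptm : ∀ g h y, S (g * h) y = S g (S h y) := hS.1.2.2
  have hlr : ∀ g : G, Function.LeftInverse (S g⁻¹) (S g) := by
    intro g y
    rw [← hptm, inv_mul_cancel, hpt1]
  have himg : ∀ (g : G) (B : Set Y), S g '' B = S g⁻¹ ⁻¹' B := by
    intro g B
    have hrl : Function.RightInverse (S g⁻¹) (S g) := fun y => by
      have := hlr g⁻¹ y
      rwa [inv_inv] at this
    exact congrFun (Set.image_eq_preimage_of_inverse (hlr g) hrl) B
  -- the Koopman representation transported to a `Type 0` Hilbert space
  set V : G →* (Lp ℂ 2 ν' ≃ₗᵢ[ℂ] Lp ℂ 2 ν') :=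
    MonoidHom.mk' (fun g => (Φ.trans (koopman hS g)).trans Φ.symm) (by
      intro a b
      ext x
      simp only [LinearIsometryEquiv.trans_apply, LinearIsometryEquiv.coe_mul,
        Function.comp_apply, LinearIsometryEquiv.apply_symm_apply]
      rw [koopman_mul hS a b]) with hVdef
  have hVapp : ∀ (g : G) (ξ : Lp ℂ 2 ν'), V g ξ = Φ.symm (koopman hS g (Φ ξ)) :=
    fun g ξ => rfl
  have hmeasV : ∀ ξ η : Lp ℂ 2 ν', Measurable fun g : G => ‖V g ξ - η‖ := by
    intro ξ η
    have hre : ∀ g : G, ‖V g ξ - η‖ = ‖koopman hS g (Φ ξ) - Φ η‖ := by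
      intro g
      rw [hVapp]
      calc ‖Φ.symm (koopman hS g (Φ ξ)) - η‖
          = ‖Φ (Φ.symm (koopman hS g (Φ ξ)) - η)‖ := (Φ.norm_map _).symm
        _ = ‖koopman hS g (Φ ξ) - Φ η‖ := by
            rw [map_sub, Φ.apply_symm_apply]
    simp only [hre]
    exact koopman_norm_meas hS (Φ ξ) (Φ η)
  have hcont : ∀ ξ η : Lp ℂ 2 ν', Continuous fun g : G => (inner ℂ (V g ξ) η : ℂ) :=
    fun ξ η => (koopman_continuous' V hmeasV ξ).inner continuous_const
  -- almost invariant vectors coming from the Følner sequence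
  have halmost : ∀ ε : ℝ, 0 < ε → ∀ K : Set G, IsCompact K →
      ∃ ξ : Lp ℂ 2 ν', ‖ξ‖ = 1 ∧ ∀ g ∈ K, ‖V g ξ - ξ‖ < ε := by
    intro ε hε K hK
    have hδ : (0 : ℝ≥0∞) < ENNReal.ofReal (ε ^ 2) :=
      ENNReal.ofReal_pos.2 (by positivity)
    obtain ⟨n, hn⟩ := ((hA2 K hK).eventually_lt_const hδ).exists
    obtain ⟨hsm, hs0, hst⟩ := hA1 n
    set m : ℝ := (ν (A n)).toReal with hm
    have hm0 : 0 < m := ENNReal.toReal_pos hs0.ne' hst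
    have hmr0 : 0 < m ^ ((1:ℝ)/2) := Real.rpow_pos_of_pos hm0 _
    set c : ℝ := (m ^ ((1:ℝ)/2))⁻¹ with hc
    have hc0 : 0 < c := inv_pos.2 hmr0
    set ind := indicatorConstLp (μ := ν) 2 hsm hst (1 : ℂ) with hind
    refine ⟨Φ.symm ((c : ℂ) • ind), ?_, ?_⟩
    · rw [Φ.symm.norm_map, norm_smul, hind,
        norm_indicatorConstLp two_ne_zero ENNReal.ofNat_ne_top]
      simp only [Complex.norm_real, norm_one, one_mul, Real.norm_eq_abs,
        abs_of_pos hc0]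
      rw [hc, Measure.real, ← hm]
      norm_num
      exact inv_mul_cancel₀ hmr0.ne'
    · intro g hgK
      have hpre_m : MeasurableSet (S g⁻¹ ⁻¹' A n) := hsm.preimage (hS.2 g⁻¹).measurable
      have hpre_t : ν (S g⁻¹ ⁻¹' A n) ≠ ∞ := by
        rw [(hS.2 g⁻¹).measure_preimage hsm.nullMeasurableSet]
        exact hst
      have hKg : koopman hS g ind = indicatorConstLp 2 hpre_m hpre_t (1 : ℂ) := by
        rw [koopman_apply, hind]
        exact Lp.indicatorConstLp_compMeasurePreserving hsm hst 1 (hS.2 g⁻¹)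
      have hnorm : ‖V g (Φ.symm ((c : ℂ) • ind)) - Φ.symm ((c : ℂ) • ind)‖
          = c * ‖koopman hS g ind - ind‖ := by
        rw [hVapp, Φ.apply_symm_apply]
        calc ‖Φ.symm (koopman hS g ((c : ℂ) • ind)) - Φ.symm ((c : ℂ) • ind)‖
            = ‖Φ.symm (koopman hS g ((c : ℂ) • ind) - (c : ℂ) • ind)‖ := by rw [map_sub]
          _ = ‖koopman hS g ((c : ℂ) • ind) - (c : ℂ) • ind‖ := Φ.symm.norm_map _
          _ = ‖(c : ℂ) • (koopman hS g ind - ind)‖ := by rw [(koopman hS g).map_smul, smul_sub]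
          _ = c * ‖koopman hS g ind - ind‖ := by
              rw [norm_smul, Complex.norm_real, Real.norm_eq_abs, abs_of_pos hc0]
      have hdist : ‖koopman hS g ind - ind‖
          = (ν (symmDiff (S g '' A n) (A n))).toReal ^ ((1:ℝ)/2) := by
        rw [hKg, hind]
        have hd := dist_indicatorConstLp_eq_norm (hs := hpre_m) (ht := hsm)
          (hμs := hpre_t) (hμt := hst) (c := (1 : ℂ)) (p := 2)
        rw [dist_eq_norm] at hd
        rw [hd, norm_indicatorConstLp two_ne_zero ENNReal.ofNat_ne_top, himg g]
        norm_num
        rfl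
      have hbound : ν (symmDiff (S g '' A n) (A n)) / ν (A n) < ENNReal.ofReal (ε ^ 2) :=
        lt_of_le_of_lt
          (le_biSup (fun g => ν (symmDiff (S g '' A n) (A n)) / ν (A n)) hgK) hn
      have htR : (ν (symmDiff (S g '' A n) (A n)) / ν (A n)).toReal < ε ^ 2 :=
        ENNReal.toReal_lt_of_lt_ofReal hbound
      rw [ENNReal.toReal_div, ← hm] at htR
      set d : ℝ := (ν (symmDiff (S g '' A n) (A n))).toReal with hdd
      have hd0 : (0:ℝ) ≤ d := ENNReal.toReal_nonneg
      rw [hnorm, hdist]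
      have heq : c * d ^ ((1:ℝ)/2) = (d / m) ^ ((1:ℝ)/2) := by
        rw [Real.div_rpow hd0 hm0.le, hc]; ring
      rw [heq]
      calc (d / m) ^ ((1:ℝ)/2) < (ε ^ 2) ^ ((1:ℝ)/2) :=
            Real.rpow_lt_rpow (by positivity) htR (by norm_num)
        _ = ε := by
            rw [← Real.rpow_natCast ε 2, ← Real.rpow_mul hε.le]
            norm_num
  -- apply property (T)
  obtain ⟨η, hη0, hηinv⟩ := hTpair (Lp ℂ 2 ν') V hcont halmost
  set ζ := Φ η with hζdef
  have hζ0 : ζ ≠ 0 := by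
    intro hcon
    exact hη0 (Φ.injective (hcon.trans (map_zero Φ).symm))
  have hζinv : ∀ h ∈ H, koopman hS h ζ = ζ := by
    intro h hh
    have hx := congrArg Φ (hηinv h hh)
    rw [hVapp, Φ.apply_symm_apply] at hx
    exact hx
  have hζm : Measurable (⇑ζ) := (Lp.stronglyMeasurable ζ).measurable
  have hae : ∀ h ∈ H, (fun y => ζ (S h⁻¹ y)) =ᵐ[ν] ⇑ζ := by
    intro h hh
    have h1 : ⇑(koopman hS h ζ) =ᵐ[ν] ⇑ζ ∘ S h⁻¹ :=
      Lp.coeFn_compMeasurePreserving ζ (hS.2 h⁻¹)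
    rw [hζinv h hh] at h1
    exact h1.symm
  -- a threshold giving a set of positive measure
  have hex : ∃ n : ℕ, 0 < ν {y | 1 / ((n : ℝ) + 1) < ‖ζ y‖} := by
    by_contra hcon
    push_neg at hcon
    have hall : ∀ n : ℕ, ν {y | 1 / ((n : ℝ) + 1) < ‖ζ y‖} = 0 :=
      fun n => le_antisymm (hcon n) zero_le
    have hsub : {y | ¬ζ y = 0} ⊆ ⋃ n : ℕ, {y | 1 / ((n : ℝ) + 1) < ‖ζ y‖} := by
      intro y hy
      obtain ⟨n, hn⟩ := exists_nat_one_div_lt (norm_pos_iff.2 hy)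
      exact Set.mem_iUnion.2 ⟨n, hn⟩
    have h0 : ν {y | ¬ζ y = 0} = 0 :=
      measure_mono_null hsub (measure_iUnion_null hall)
    have hz : ⇑ζ =ᵐ[ν] 0 := by
      rw [Filter.EventuallyEq, ae_iff]
      simpa using h0
    exact hζ0 (Lp.ext (hz.trans (Lp.coeFn_zero ℂ 2 ν).symm))
  obtain ⟨n, hn⟩ := hex
  set t : ℝ := 1 / ((n : ℝ) + 1) with htdef
  have ht0 : 0 < t := by positivity
  set B := {y | t < ‖ζ y‖} with hBdef
  have hBm : MeasurableSet B := measurableSet_lt measurable_const hζm.norm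
  have hBfin : ν B ≠ ∞ := by
    have hmar := meas_ge_le_mul_pow_eLpNorm_enorm ν two_ne_zero ENNReal.ofNat_ne_top
      (Lp.aestronglyMeasurable ζ) (ε := ENNReal.ofReal t)
      (ENNReal.ofReal_pos.2 ht0).ne' (fun h => absurd h ENNReal.ofReal_ne_top)
    have hsub : B ⊆ {x | ENNReal.ofReal t ≤ (‖ζ x‖₊ : ℝ≥0∞)} := by
      intro y hy
      simp only [Set.mem_setOf_eq]
      rw [← enorm_eq_nnnorm, ← ofReal_norm]
      exact ENNReal.ofReal_le_ofReal (le_of_lt hy)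
    refine ne_top_of_le_ne_top ?_ ((measure_mono hsub).trans hmar)
    apply ENNReal.mul_ne_top
    · exact ENNReal.rpow_ne_top_of_nonneg (by norm_num)
        (ENNReal.inv_ne_top.2 (ENNReal.ofReal_pos.2 ht0).ne')
    · exact ENNReal.rpow_ne_top_of_nonneg (by norm_num) (Lp.eLpNorm_ne_top ζ)
  refine hnoinv ⟨B, hBm, hn, hBfin, ?_⟩
  intro h hh
  have hnull : ν {y | ¬ζ (S h⁻¹ y) = ζ y} = 0 := by
    have hx := hae h hh
    rw [Filter.EventuallyEq, ae_iff] at hx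
    exact hx
  refine measure_mono_null ?_ hnull
  rw [himg h B]
  intro y hy
  rcases Set.mem_symmDiff.1 hy with ⟨h1, h2⟩ | ⟨h1, h2⟩
  · intro he
    exact h2 (show t < ‖ζ y‖ from he ▸ h1)
  · intro he
    exact h2 (show t < ‖ζ (S h⁻¹ y)‖ from he ▸ h1)
end
end

section
/- Let (Y, γ) be a standard nonatomic probability space, 𝐁 = (B_n)_{n≥1} a sequence of measurable subsets of Y with γ(B_n) > 0, and T a γ-preserving Borel bijection of Y such that ∑_{n=1}^∞ γ(B_n △ T B_n)/γ(B_n) < ∞. Let μ be a measure on X = Y^ℕ whose restriction to each 𝐁^n equals ⊗_{j=1}^n (γ/γ(B_j)) ⊗ ⊗_{j>n} (γ|_{B_j}/γ(B_j)). Then the coordinatewise product map 𝐓 = T × T × ⋯ on X preserves μ, i.e. μ ∘ 𝐓^{-1} = μ. -/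
open MeasureTheory Filter Topology Set ENNReal

noncomputable section

namespace RPAux

variable {Y : Type*} [MeasurableSpace Y]

def rpCyl (C : ℕ → Set Y) : Set (ℕ → Y) := {x | ∀ j, x j ∈ C j}

lemma measurableSet_rpCyl {C : ℕ → Set Y} (h : ∀ j, MeasurableSet (C j)) :
    MeasurableSet (rpCyl C) := by
  have : rpCyl C = Set.pi Set.univ C := by
    ext x; simp [rpCyl, Set.mem_univ_pi]
  rw [this]
  exact MeasurableSet.pi Set.countable_univ fun j _ => h j

omit [MeasurableSpace Y] in
lemma rpCyl_mono {C D : ℕ → Set Y} (h : ∀ j, C j ⊆ D j) : rpCyl C ⊆ rpCyl D :=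
  fun _ hx j => h j (hx j)

omit [MeasurableSpace Y] in
lemma tailCylinder_eq_rpCyl (B : ℕ → Set Y) (n : ℕ) :
    tailCylinder B n = rpCyl (fun j => if n ≤ j then B j else Set.univ) := by
  ext x
  simp only [tailCylinder, rpCyl, Set.mem_setOf_eq]
  constructor
  · intro h j
    by_cases hj : n ≤ j <;> simp [hj, h j]
  · intro h j hj
    have := h j
    simpa [hj] using this

omit [MeasurableSpace Y] in
lemma tailCylinder_mono (B : ℕ → Set Y) : Monotone (tailCylinder B) := by
  intro a b hab x hx j hj
  exact hx j (hab.trans hj)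

end RPAux

open RPAux

/-- **Proposition 1.6.** If `T` is a `γ`-preserving Borel bijection of a standard nonatomic
probability space and `∑ γ (B n ∆ T (B n)) / γ (B n) < ∞`, then the coordinatewise product
map `𝐓 = T × T × ⋯` preserves the restricted infinite power `μ = γ^𝐁`. -/
theorem prod_map_measurePreserving_restrictedPower {Y : Type*} [MeasurableSpace Y]
    [StandardBorelSpace Y]
    (γ : Measure Y) [IsProbabilityMeasure γ] (hna : ∀ y : Y, γ {y} = 0)
    (B : ℕ → Set Y) (hBm : ∀ n, MeasurableSet (B n)) (hBpos : ∀ n, 0 < γ (B n))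
    (T : Y ≃ᵐ Y) (hT : MeasurePreserving T γ γ)
    (hsum : (∑' n, γ (symmDiff (B n) (⇑T '' B n)) / γ (B n)) ≠ ∞)
    (μ : Measure (ℕ → Y))
    (hcyl : ∀ (m : ℕ) (C : ℕ → Set Y), (∀ j, MeasurableSet (C j)) →
      (∀ j, m ≤ j → C j = B j) →
      μ {x : ℕ → Y | ∀ j, x j ∈ C j} = ∏ j ∈ Finset.range m, γ (C j) / γ (B j))
    (hsupp : μ ((⋃ n, tailCylinder B n)ᶜ) = 0) :
    MeasurePreserving (fun (x : ℕ → Y) (n : ℕ) => T (x n)) μ μ := by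
    classical
  have hTbig : Measurable (fun (x : ℕ → Y) (n : ℕ) => T (x n)) :=
    measurable_pi_lambda _ fun n => T.measurable.comp (measurable_pi_apply n)
  refine ⟨hTbig, ?_⟩
  set ν : Measure (ℕ → Y) := μ.map (fun (x : ℕ → Y) (n : ℕ) => T (x n)) with hν
  -- basic facts
  have hB0 : ∀ n, γ (B n) ≠ 0 := fun n => (hBpos n).ne'
  have hBt : ∀ n, γ (B n) ≠ ∞ := fun n => measure_ne_top γ _
  have hTpre : ∀ (S : Set Y), MeasurableSet S → γ (⇑T ⁻¹' S) = γ S := fun S hS =>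
    hT.measure_preimage hS.nullMeasurableSet
  have hTBm : ∀ n, MeasurableSet (⇑T ⁻¹' B n) := fun n => T.measurable (hBm n)
  have hfin : ∀ (C : Set Y) (n : ℕ), γ C / γ (B n) ≠ ∞ := fun C n =>
    (ENNReal.div_lt_top (measure_ne_top γ C) (hB0 n)).ne
  have hone : ∀ n, γ (⇑T ⁻¹' B n) / γ (B n) = 1 := fun n => by
    rw [hTpre _ (hBm n)]; exact ENNReal.div_self (hB0 n) (hBt n)
  have hcyl' : ∀ (m : ℕ) (C : ℕ → Set Y), (∀ j, MeasurableSet (C j)) →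
      (∀ j, m ≤ j → C j = B j) →
      μ (rpCyl C) = ∏ j ∈ Finset.range m, γ (C j) / γ (B j) := hcyl
  -- the defect sequence and its tail sums
  set δ : ℕ → ℝ≥0∞ := fun n => γ (symmDiff (B n) (⇑T '' B n)) / γ (B n) with hδdef
  have hδle : ∀ n, γ (B n \ ⇑T ⁻¹' B n) / γ (B n) ≤ δ n := by
    intro n
    show γ (B n \ ⇑T ⁻¹' B n) / γ (B n) ≤ γ (symmDiff (B n) (⇑T '' B n)) / γ (B n)
    refine ENNReal.div_le_div_right ?_ _
    have himg : MeasurableSet (⇑T '' B n) := by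
      rw [T.image_eq_preimage_symm]
      exact T.symm.measurable (hBm n)
    have h1 : symmDiff (B n) (⇑T ⁻¹' B n) = ⇑T ⁻¹' (symmDiff (⇑T '' B n) (B n)) := by
      rw [Set.preimage_symmDiff, Set.preimage_image_eq _ T.injective]
    have h2 : γ (symmDiff (B n) (⇑T ⁻¹' B n)) = γ (symmDiff (B n) (⇑T '' B n)) := by
      rw [h1, hTpre _ (himg.symmDiff (hBm n)), symmDiff_comm]
    calc γ (B n \ ⇑T ⁻¹' B n) ≤ γ (symmDiff (B n) (⇑T ⁻¹' B n)) :=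
          measure_mono (by rw [Set.symmDiff_def]; exact Set.subset_union_left)
      _ = _ := h2
  set R : ℕ → ℝ≥0∞ := fun N => ∑' k, δ (k + N) with hRdef
  have hRt : Tendsto R atTop (𝓝 0) := ENNReal.tendsto_sum_nat_add δ hsum
  have hRcomp : ∀ m : ℕ, Tendsto (fun n => R (m + n)) atTop (𝓝 0) := by
    intro m
    exact hRt.comp (by simpa [Nat.add_comm] using tendsto_add_atTop_nat m)
  -- KEY computation
  have key : ∀ (m : ℕ) (D : ℕ → Set Y), (∀ j, MeasurableSet (D j)) →
      (∀ j, m ≤ j → D j = ⇑T ⁻¹' B j) →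
      μ (rpCyl D) = ∏ j ∈ Finset.range m, γ (D j) / γ (B j) := by
    intro m D hDm hDtail
    set P := ∏ j ∈ Finset.range m, γ (D j) / γ (B j) with hPdef
    have hPfin : P ≠ ∞ := by
      rw [hPdef]
      exact (ENNReal.prod_lt_top fun j _ => (hfin _ _).lt_top).ne
    have hPmn : ∀ n : ℕ, ∏ j ∈ Finset.range (m + n), γ (D j) / γ (B j) = P := by
      intro n
      rw [Finset.prod_range_add]
      have h2 : ∀ i ∈ Finset.range n, γ (D (m + i)) / γ (B (m + i)) = 1 := by
        intro i _
        rw [hDtail (m + i) (Nat.le_add_right m i)]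
        exact hone (m + i)
      rw [Finset.prod_congr rfl h2, Finset.prod_const_one, mul_one, hPdef]
    have hFmeas : ∀ (n j : ℕ), MeasurableSet (if j < m + n then D j else B j) := by
      intro n j; by_cases h : j < m + n <;> simp [h, hDm j, hBm j]
    have hF : ∀ n : ℕ, μ (rpCyl fun j => if j < m + n then D j else B j) = P := by
      intro n
      rw [hcyl' (m + n) _ (hFmeas n) (fun j hj => by simp [Nat.not_lt.mpr hj])]
      have h1 : ∀ j ∈ Finset.range (m + n),
          γ (if j < m + n then D j else B j) / γ (B j) = γ (D j) / γ (B j) := by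
        intro j hj
        rw [if_pos (Finset.mem_range.mp hj)]
      rw [Finset.prod_congr rfl h1, hPmn n]
    set E : ℕ → ℕ → Set Y := fun n j => if j < m + n then D j else D j ∩ B j with hEdef
    have hEsub : ∀ n j, E n j ⊆ (if j < m + n then D j else B j) := by
      intro n j; by_cases h : j < m + n <;> simp [hEdef, h]
    have hupper : ∀ n, μ (rpCyl (E n)) ≤ P := fun n =>
      le_of_le_of_eq (measure_mono (rpCyl_mono (hEsub n))) (hF n)
    have hG : ∀ (n k : ℕ),
        μ (rpCyl fun i => if i = m + n + k then B i \ ⇑T ⁻¹' B i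
            else if i < m + n then D i else B i) ≤ P * δ (m + n + k) := by
      intro n k
      have hmeas : ∀ i, MeasurableSet (if i = m + n + k then B i \ ⇑T ⁻¹' B i
          else if i < m + n then D i else B i) := by
        intro i
        by_cases h1 : i = m + n + k
        · simp [h1, (hBm _).diff (hTBm _)]
        · by_cases h2 : i < m + n <;> simp [h1, h2, hDm i, hBm i]
      rw [hcyl' (m + n + k + 1) _ hmeas (fun i hi => by
        have h1 : i ≠ m + n + k := by omega
        have h2 : ¬ i < m + n := by omega
        simp [h1, h2])]
      rw [Finset.prod_range_succ]
      have hlast : γ (if m + n + k = m + n + k then B (m + n + k) \ ⇑T ⁻¹' B (m + n + k)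
          else if m + n + k < m + n then D (m + n + k) else B (m + n + k)) / γ (B (m + n + k))
          = γ (B (m + n + k) \ ⇑T ⁻¹' B (m + n + k)) / γ (B (m + n + k)) := by
        simp
      rw [hlast]
      have hrest : ∏ i ∈ Finset.range (m + n + k),
          γ (if i = m + n + k then B i \ ⇑T ⁻¹' B i
            else if i < m + n then D i else B i) / γ (B i) = P := by
        rw [Finset.prod_range_add (f := fun i => γ (if i = m + n + k then B i \ ⇑T ⁻¹' B i
            else if i < m + n then D i else B i) / γ (B i)) (m + n) k]
        have hA : ∀ i ∈ Finset.range (m + n),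
            γ (if i = m + n + k then B i \ ⇑T ⁻¹' B i
              else if i < m + n then D i else B i) / γ (B i) = γ (D i) / γ (B i) := by
          intro i hi
          have hi' := Finset.mem_range.mp hi
          have h1 : i ≠ m + n + k := by omega
          rw [if_neg h1, if_pos hi']
        have hB2 : ∀ t ∈ Finset.range k,
            γ (if m + n + t = m + n + k then B (m + n + t) \ ⇑T ⁻¹' B (m + n + t)
              else if m + n + t < m + n then D (m + n + t) else B (m + n + t))
              / γ (B (m + n + t)) = 1 := by
          intro t ht
          have ht' := Finset.mem_range.mp ht
          have h1 : m + n + t ≠ m + n + k := by omega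
          have h2 : ¬ m + n + t < m + n := by omega
          rw [if_neg h1, if_neg h2]
          exact ENNReal.div_self (hB0 _) (hBt _)
        rw [Finset.prod_congr rfl hA, Finset.prod_congr rfl hB2, Finset.prod_const_one, mul_one,
          hPmn n]
      rw [hrest]
      exact mul_le_mul_right (hδle (m + n + k)) P
    have hsubset : ∀ n, rpCyl (fun j => if j < m + n then D j else B j) ⊆
        rpCyl (E n) ∪ ⋃ k, rpCyl (fun i => if i = m + n + k then B i \ ⇑T ⁻¹' B i
            else if i < m + n then D i else B i) := by
      intro n x hx
      by_cases hxE : x ∈ rpCyl (E n)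
      · exact Or.inl hxE
      · right
        have hex : ∃ j, x j ∉ E n j := by
          by_contra h; push_neg at h; exact hxE h
        obtain ⟨j, hj⟩ := hex
        have hjge : ¬ j < m + n := by
          intro hlt
          apply hj
          have : x j ∈ D j := by simpa [hlt] using hx j
          simpa [hEdef, hlt] using this
        have hxB : x j ∈ B j := by simpa [hjge] using hx j
        have hxD : x j ∉ D j := by
          intro hD
          apply hj
          simp only [hEdef, if_neg hjge]
          exact ⟨hD, hxB⟩
        have hxT : x j ∉ ⇑T ⁻¹' B j := by
          rw [← hDtail j (by omega)]
          exact hxD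
        refine Set.mem_iUnion.mpr ⟨j - (m + n), fun i => ?_⟩
        have hjeq : m + n + (j - (m + n)) = j := by omega
        by_cases h1 : i = m + n + (j - (m + n))
        · have h1' : i = j := by omega
          subst h1'
          simp only [if_pos h1]
          exact ⟨hxB, hxT⟩
        · simp only [if_neg h1]
          exact hx i
    have hlower : ∀ n, P ≤ μ (rpCyl (E n)) + P * R (m + n) := by
      intro n
      have h1 : μ (rpCyl fun j => if j < m + n then D j else B j)
          ≤ μ (rpCyl (E n)) + ∑' k, μ (rpCyl fun i => if i = m + n + k then B i \ ⇑T ⁻¹' B i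
              else if i < m + n then D i else B i) :=
        le_trans (measure_mono (hsubset n)) (le_trans (measure_union_le _ _)
          (add_le_add_right (measure_iUnion_le _) _))
      rw [hF n] at h1
      refine h1.trans (add_le_add_right ?_ _)
      calc (∑' k, μ (rpCyl fun i => if i = m + n + k then B i \ ⇑T ⁻¹' B i
              else if i < m + n then D i else B i))
          ≤ ∑' k, P * δ (m + n + k) := ENNReal.tsum_le_tsum fun k => hG n k
        _ = P * ∑' k, δ (k + (m + n)) := by
            rw [← ENNReal.tsum_mul_left]
            exact tsum_congr fun k => by rw [show m + n + k = k + (m + n) by omega]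
        _ = P * R (m + n) := rfl
    have hEmono : Monotone fun n => rpCyl (E n) := by
      intro a b hab
      apply rpCyl_mono
      intro j
      by_cases h1 : j < m + a
      · have h2 : j < m + b := by omega
        simp [hEdef, h1, h2]
      · by_cases h2 : j < m + b
        · simp only [hEdef, if_neg h1, if_pos h2]
          exact Set.inter_subset_left
        · simp [hEdef, h1, h2]
    have hEU : rpCyl D ∩ (⋃ n, tailCylinder B n) = ⋃ n, rpCyl (E n) := by
      ext x
      simp only [Set.mem_inter_iff, Set.mem_iUnion]
      constructor
      · rintro ⟨hxD, n, hxT⟩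
        refine ⟨n, fun j => ?_⟩
        by_cases h1 : j < m + n
        · simpa [hEdef, h1] using hxD j
        · simp only [hEdef, if_neg h1]
          exact ⟨hxD j, hxT j (by omega)⟩
      · rintro ⟨n, hx⟩
        constructor
        · intro j
          have := hx j
          by_cases h1 : j < m + n
          · simpa [hEdef, h1] using this
          · exact (by simpa [hEdef, h1] using this : x j ∈ D j ∩ B j).1
        · refine ⟨m + n, ?_⟩
          show ∀ j, m + n ≤ j → x j ∈ B j
          intro j hj
          have h1 : ¬ j < m + n := by omega
          exact (by simpa [hEdef, h1] using hx j : x j ∈ D j ∩ B j).2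
    have hμD : μ (rpCyl D) = ⨆ n, μ (rpCyl (E n)) := by
      rw [← measure_inter_conull hsupp, hEU, hEmono.directed_le.measure_iUnion]
    rw [hμD]
    refine le_antisymm (iSup_le hupper) ?_
    have htend : Tendsto (fun n => (⨆ n', μ (rpCyl (E n'))) + P * R (m + n)) atTop
        (𝓝 ((⨆ n', μ (rpCyl (E n'))) + P * 0)) :=
      Filter.Tendsto.const_add _ (ENNReal.Tendsto.const_mul (hRcomp m) (Or.inr hPfin))
    rw [mul_zero, add_zero] at htend
    exact ge_of_tendsto htend (Filter.Eventually.of_forall fun n =>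
      (hlower n).trans (add_le_add_left (le_iSup (fun n' => μ (rpCyl (E n'))) n) _))
  -- ν agrees with μ on eventually-B cylinders
  have hTcylpre : ∀ C : ℕ → Set Y,
      (fun (x : ℕ → Y) (n : ℕ) => T (x n)) ⁻¹' rpCyl C = rpCyl (fun j => ⇑T ⁻¹' C j) :=
    fun C => rfl
  have hνcyl : ∀ (m : ℕ) (C : ℕ → Set Y), (∀ j, MeasurableSet (C j)) →
      (∀ j, m ≤ j → C j = B j) →
      ν (rpCyl C) = ∏ j ∈ Finset.range m, γ (C j) / γ (B j) := by
    intro m C hCm hCt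
    rw [hν, Measure.map_apply hTbig (measurableSet_rpCyl hCm), hTcylpre]
    rw [key m _ (fun j => T.measurable (hCm j)) (fun j hj => by rw [hCt j hj])]
    exact Finset.prod_congr rfl fun j _ => by rw [hTpre _ (hCm j)]
  -- ν is also carried by the union of tail cylinders
  have htailm : ∀ n, MeasurableSet (tailCylinder B n) := by
    intro n
    rw [tailCylinder_eq_rpCyl]
    exact measurableSet_rpCyl fun j => by
      by_cases hj : n ≤ j <;> simp [hj, hBm j]
  have hνsupp : ν ((⋃ n, tailCylinder B n)ᶜ) = 0 := by
    have hUc : MeasurableSet ((⋃ n, tailCylinder B n)ᶜ) := (MeasurableSet.iUnion htailm).compl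
    rw [hν, Measure.map_apply hTbig hUc]
    have hpre : (fun (x : ℕ → Y) (n : ℕ) => T (x n)) ⁻¹' (⋃ n, tailCylinder B n)ᶜ =
        (⋃ N, {x : ℕ → Y | ∀ j, N ≤ j → x j ∈ ⇑T ⁻¹' B j})ᶜ := by
      rw [Set.preimage_compl]
      congr 1
      rw [Set.preimage_iUnion]
      rfl
    rw [hpre]
    set V : Set (ℕ → Y) := ⋃ N, {x : ℕ → Y | ∀ j, N ≤ j → x j ∈ ⇑T ⁻¹' B j} with hVdef
    have hmain : ∀ n, μ (tailCylinder B n ∩ Vᶜ) = 0 := by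
      intro n
      set Q := ∏ i ∈ Finset.range n, γ (Set.univ : Set Y) / γ (B i) with hQdef
      have hQfin : Q ≠ ∞ := by
        rw [hQdef]; exact (ENNReal.prod_lt_top fun j _ => (hfin _ _).lt_top).ne
      have hH : ∀ k : ℕ, μ (rpCyl fun i => if i = n + k then B i \ ⇑T ⁻¹' B i
          else if i < n then Set.univ else B i) ≤ Q * δ (n + k) := by
        intro k
        have hmeas : ∀ i, MeasurableSet (if i = n + k then B i \ ⇑T ⁻¹' B i
            else if i < n then Set.univ else B i) := by
          intro i
          by_cases h1 : i = n + k
          · simp [h1, (hBm _).diff (hTBm _)]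
          · by_cases h2 : i < n <;> simp [h1, h2, hBm i]
        rw [hcyl' (n + k + 1) _ hmeas (fun i hi => by
          have h1 : i ≠ n + k := by omega
          have h2 : ¬ i < n := by omega
          simp [h1, h2])]
        rw [Finset.prod_range_succ]
        have hlast : γ (if n + k = n + k then B (n + k) \ ⇑T ⁻¹' B (n + k)
            else if n + k < n then Set.univ else B (n + k)) / γ (B (n + k))
            = γ (B (n + k) \ ⇑T ⁻¹' B (n + k)) / γ (B (n + k)) := by simp
        rw [hlast]
        have hrest : ∏ i ∈ Finset.range (n + k), γ (if i = n + k then B i \ ⇑T ⁻¹' B i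
            else if i < n then Set.univ else B i) / γ (B i) = Q := by
          rw [Finset.prod_range_add (f := fun i => γ (if i = n + k then B i \ ⇑T ⁻¹' B i
            else if i < n then Set.univ else B i) / γ (B i)) n k]
          have hA : ∀ i ∈ Finset.range n,
              γ (if i = n + k then B i \ ⇑T ⁻¹' B i else if i < n then Set.univ else B i)
                / γ (B i) = γ (Set.univ : Set Y) / γ (B i) := by
            intro i hi
            have hi' := Finset.mem_range.mp hi
            have h1 : i ≠ n + k := by omega
            rw [if_neg h1, if_pos hi']
          have hB2 : ∀ t ∈ Finset.range k,
              γ (if n + t = n + k then B (n + t) \ ⇑T ⁻¹' B (n + t)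
                else if n + t < n then Set.univ else B (n + t)) / γ (B (n + t)) = 1 := by
            intro t ht
            have ht' := Finset.mem_range.mp ht
            have h1 : n + t ≠ n + k := by omega
            have h2 : ¬ n + t < n := by omega
            rw [if_neg h1, if_neg h2]
            exact ENNReal.div_self (hB0 _) (hBt _)
          rw [Finset.prod_congr rfl hA, Finset.prod_congr rfl hB2, Finset.prod_const_one,
            mul_one, hQdef]
        rw [hrest]
        exact mul_le_mul_right (hδle (n + k)) Q
      have hbound : ∀ N : ℕ, μ (tailCylinder B n ∩ Vᶜ) ≤ Q * R (n + N) := by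
        intro N
        have hsub : tailCylinder B n ∩ Vᶜ ⊆ ⋃ k, rpCyl fun i =>
            if i = n + (N + k) then B i \ ⇑T ⁻¹' B i
            else if i < n then Set.univ else B i := by
          rintro x ⟨hxT, hxV⟩
          have hxV' : x ∉ {x : ℕ → Y | ∀ j, n + N ≤ j → x j ∈ ⇑T ⁻¹' B j} := fun h =>
            hxV (Set.mem_iUnion.mpr ⟨n + N, h⟩)
          have hex : ∃ j, n + N ≤ j ∧ x j ∉ ⇑T ⁻¹' B j := by
            by_contra h
            push_neg at h
            exact hxV' fun j hj => h j hj
          obtain ⟨j, hj1, hj2⟩ := hex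
          refine Set.mem_iUnion.mpr ⟨j - (n + N), fun i => ?_⟩
          by_cases h1 : i = n + (N + (j - (n + N)))
          · have h1' : i = j := by omega
            subst h1'
            simp only [if_pos h1]
            exact ⟨hxT i (by omega), hj2⟩
          · simp only [if_neg h1]
            by_cases h2 : i < n
            · simp [h2]
            · simp only [if_neg h2]
              exact hxT i (by omega)
        calc μ (tailCylinder B n ∩ Vᶜ)
            ≤ ∑' k, μ (rpCyl fun i => if i = n + (N + k) then B i \ ⇑T ⁻¹' B i
                else if i < n then Set.univ else B i) :=
              le_trans (measure_mono hsub) (measure_iUnion_le _)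
          _ ≤ ∑' k, Q * δ (n + (N + k)) := ENNReal.tsum_le_tsum fun k => hH (N + k)
          _ = Q * ∑' k, δ (k + (n + N)) := by
              rw [← ENNReal.tsum_mul_left]
              exact tsum_congr fun k => by rw [show n + (N + k) = k + (n + N) by omega]
          _ = Q * R (n + N) := rfl
      have htend : Tendsto (fun N => Q * R (n + N)) atTop (𝓝 (Q * 0)) :=
        ENNReal.Tendsto.const_mul (hRcomp n) (Or.inr hQfin)
      rw [mul_zero] at htend
      exact le_antisymm (ge_of_tendsto htend (Filter.Eventually.of_forall hbound)) zero_le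
    have hsub2 : Vᶜ ⊆ ((⋃ n, tailCylinder B n)ᶜ) ∪ ⋃ n, (tailCylinder B n ∩ Vᶜ) := by
      intro x hx
      by_cases hxU : x ∈ ⋃ n, tailCylinder B n
      · right
        obtain ⟨n, hn⟩ := Set.mem_iUnion.mp hxU
        exact Set.mem_iUnion.mpr ⟨n, hn, hx⟩
      · left
        exact hxU
    refine le_antisymm ?_ zero_le
    calc μ Vᶜ ≤ μ ((⋃ n, tailCylinder B n)ᶜ) + μ (⋃ n, tailCylinder B n ∩ Vᶜ) :=
          le_trans (measure_mono hsub2) (measure_union_le _ _)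
      _ ≤ 0 + ∑' n, μ (tailCylinder B n ∩ Vᶜ) := by
          rw [hsupp]
          exact add_le_add_right (measure_iUnion_le _) _
      _ = 0 := by simp [hmain]
  -- ν and μ agree on cylinders with eventually small coordinates
  have agree2 : ∀ (n : ℕ) (D : ℕ → Set Y), (∀ j, MeasurableSet (D j)) →
      (∀ j, n ≤ j → D j ⊆ B j) → ν (rpCyl D) = μ (rpCyl D) := by
    intro n D hDm hDsub
    set s : ℕ → Set (ℕ → Y) := fun N => rpCyl fun j => if j < N + n then D j else B j with hsdef
    have hsmeas : ∀ (N j : ℕ), MeasurableSet (if j < N + n then D j else B j) := fun N j => by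
      by_cases h : j < N + n <;> simp [h, hDm j, hBm j]
    have hanti : Antitone s := by
      intro a b hab
      apply rpCyl_mono
      intro j
      by_cases h1 : j < a + n
      · have h2 : j < b + n := by omega
        simp [h1, h2]
      · by_cases h2 : j < b + n
        · have hn : n ≤ j := by omega
          simp only [if_pos h2, if_neg h1]
          exact hDsub j hn
        · simp [h1, h2]
    have hInter : ⋂ N, s N = rpCyl D := by
      ext x
      simp only [Set.mem_iInter]
      constructor
      · intro h j
        have := h (j + 1) j
        have hlt : j < j + 1 + n := by omega
        simpa [hlt] using this
      · intro h N j
        by_cases h1 : j < N + n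
        · simpa [h1] using h j
        · have hn : n ≤ j := by omega
          simp only [if_neg h1]
          exact hDsub j hn (h j)
    have htailc : ∀ N : ℕ, ∀ j, N + n ≤ j → (if j < N + n then D j else B j) = B j :=
      fun N j hj => by simp [Nat.not_lt.mpr hj]
    have hval : ∀ N, ν (s N) = μ (s N) := by
      intro N
      rw [hsdef]
      rw [hνcyl (N + n) _ (hsmeas N) (htailc N), hcyl' (N + n) _ (hsmeas N) (htailc N)]
    have hfinμ : μ (s 0) ≠ ∞ := by
      rw [hsdef, hcyl' (0 + n) _ (hsmeas 0) (htailc 0)]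
      exact (ENNReal.prod_lt_top fun j _ => (hfin _ _).lt_top).ne
    have h1 : Tendsto (μ ∘ s) atTop (𝓝 (μ (rpCyl D))) := by
      rw [← hInter]
      exact tendsto_measure_iInter_atTop
        (fun N => (measurableSet_rpCyl (hsmeas N)).nullMeasurableSet) hanti ⟨0, hfinμ⟩
    have h2 : Tendsto (ν ∘ s) atTop (𝓝 (ν (rpCyl D))) := by
      rw [← hInter]
      exact tendsto_measure_iInter_atTop
        (fun N => (measurableSet_rpCyl (hsmeas N)).nullMeasurableSet) hanti
        ⟨0, by rw [hval 0]; exact hfinμ⟩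
    have heq : ν ∘ s = μ ∘ s := funext fun N => hval N
    rw [heq] at h2
    exact tendsto_nhds_unique h2 h1
  -- restrictions to tail cylinders agree
  have hres : ∀ n, ν.restrict (tailCylinder B n) = μ.restrict (tailCylinder B n) := by
    intro n
    have htmeas : ∀ j, MeasurableSet (if n ≤ j then B j else (Set.univ : Set Y)) := fun j => by
      by_cases h : n ≤ j <;> simp [h, hBm j]
    have htcond : ∀ j, n ≤ j → (if n ≤ j then B j else (Set.univ : Set Y)) = B j :=
      fun j hj => if_pos hj
    have hμtail : μ (tailCylinder B n) ≠ ∞ := by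
      rw [tailCylinder_eq_rpCyl, hcyl' n _ htmeas htcond]
      exact (ENNReal.prod_lt_top fun j _ => (hfin _ _).lt_top).ne
    have hνtail : ν (tailCylinder B n) = μ (tailCylinder B n) := by
      rw [tailCylinder_eq_rpCyl, hνcyl n _ htmeas htcond, hcyl' n _ htmeas htcond]
    have : IsFiniteMeasure (ν.restrict (tailCylinder B n)) := by
      constructor
      rw [Measure.restrict_apply_univ, hνtail]
      exact hμtail.lt_top
    refine ext_of_generate_finite _ generateFrom_squareCylinders.symm
      (isPiSystem_squareCylinders (fun i => MeasurableSpace.isPiSystem_measurableSet)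
        (fun i => MeasurableSet.univ)) ?_ ?_
    · rintro S ⟨I, t, ht, rfl⟩
      have htm : ∀ i, MeasurableSet (t i) := fun i => ht i (Set.mem_univ i)
      have hSm : MeasurableSet ((I : Set ℕ).pi t) :=
        MeasurableSet.pi (Finset.countable_toSet I) fun i _ => htm i
      rw [Measure.restrict_apply hSm, Measure.restrict_apply hSm]
      have hDeq : (I : Set ℕ).pi t ∩ tailCylinder B n =
          rpCyl fun j => (if j ∈ I then t j else Set.univ) ∩
            (if n ≤ j then B j else Set.univ) := by
        ext x
        simp only [Set.mem_inter_iff, Set.mem_pi, Finset.mem_coe, Set.mem_setOf_eq]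
        constructor
        · rintro ⟨hx1, hx2⟩
          intro j
          constructor
          · by_cases hj : j ∈ I
            · simpa [hj] using hx1 j hj
            · simp [hj]
          · by_cases hj : n ≤ j
            · simpa [hj] using hx2 j hj
            · simp [hj]
        · intro h
          constructor
          · intro j hj
            have := (h j).1
            simpa [hj] using this
          · intro j hj
            have := (h j).2
            simpa [hj] using this
      rw [hDeq]
      refine agree2 n _ (fun j => ?_) (fun j hj => ?_)
      · refine MeasurableSet.inter ?_ ?_
        · by_cases hj : j ∈ I <;> simp [hj, htm j]
        · by_cases hj : n ≤ j <;> simp [hj, hBm j]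
      · intro x hx
        have := hx.2
        simpa [hj] using this
    · rw [Measure.restrict_apply_univ, Measure.restrict_apply_univ, hνtail]
  -- conclude
  ext s hs
  have h1 : ν s = ν (s ∩ ⋃ n, tailCylinder B n) := (measure_inter_conull hνsupp).symm
  have h2 : μ s = μ (s ∩ ⋃ n, tailCylinder B n) := (measure_inter_conull hsupp).symm
  rw [h1, h2]; simp only [Set.inter_iUnion]
  have hd : Directed (· ⊆ ·) fun n => s ∩ tailCylinder B n :=
    (Monotone.directed_le fun a b hab => Set.inter_subset_inter_right _ (tailCylinder_mono B hab))
  rw [hd.measure_iUnion, hd.measure_iUnion]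
  refine iSup_congr fun n => ?_
  rw [← Measure.restrict_apply' (htailm n), ← Measure.restrict_apply' (htailm n), hres n]
end
end

section
/- Let (Y, γ) be a standard nonatomic probability space, 𝐁 = (B_n)_{n≥1} a sequence of measurable subsets with γ(B_n) > 0, and T a γ-preserving Borel bijection of Y such that ∑_{n=1}^∞ γ(B_n △ T B_n)/γ(B_n) < ∞. Let μ = γ^𝐁 and let 𝐓 = T × T × ⋯ be the coordinatewise product map on X = Y^ℕ. Then for every n, μ(𝐓 𝐁^n ∩ 𝐁^n) = (∏_{j=1}^n γ(B_j)^{-1}) · ∏_{j>n} (γ(B_j ∩ T B_j)/γ(B_j)), and consequently μ(𝐓 𝐁^n ∩ 𝐁^n)/μ(𝐁^n) → 1 as n → ∞. -/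
open MeasureTheory Filter Topology Set ENNReal

noncomputable section

section AuxProdLemmas

open Finset

private lemma myaux_prod_antitone {f : ℕ → ℝ≥0∞} (hf : ∀ i, f i ≤ 1) :
    Antitone fun s : Finset ℕ => ∏ i ∈ s, f i := by
  intro s t hst
  dsimp only
  rw [← Finset.prod_sdiff hst]
  calc (∏ i ∈ t \ s, f i) * ∏ i ∈ s, f i
      ≤ 1 * ∏ i ∈ s, f i := by
        gcongr
        exact Finset.prod_le_one (fun _ _ => zero_le') (fun i _ => hf i)
    _ = ∏ i ∈ s, f i := one_mul _

private lemma myaux_hasProd_of_le_one {f : ℕ → ℝ≥0∞} (hf : ∀ i, f i ≤ 1) :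
    HasProd f (⨅ s : Finset ℕ, ∏ i ∈ s, f i) :=
  tendsto_atTop_iInf (myaux_prod_antitone hf)

private lemma myaux_tprod_eq_iInf {f : ℕ → ℝ≥0∞} (hf : ∀ i, f i ≤ 1) :
    (∏' i, f i) = ⨅ s : Finset ℕ, ∏ i ∈ s, f i :=
  (myaux_hasProd_of_le_one hf).tprod_eq

private lemma myaux_tendsto_range_prod {f : ℕ → ℝ≥0∞} (hf : ∀ i, f i ≤ 1) :
    Tendsto (fun m => ∏ i ∈ Finset.range m, f i) atTop (𝓝 (∏' i, f i)) := by
  have h := myaux_hasProd_of_le_one hf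
  rw [h.tprod_eq]
  exact h.tendsto_prod_nat

private lemma myaux_one_le_prod_add_sum {f g : ℕ → ℝ≥0∞} (hf : ∀ i, f i ≤ 1)
    (hfg : ∀ i, 1 ≤ f i + g i) (s : Finset ℕ) :
    1 ≤ (∏ i ∈ s, f i) + ∑ i ∈ s, g i := by
  induction s using Finset.cons_induction with
  | empty => simp
  | cons a s ha ih =>
      rw [Finset.prod_cons, Finset.sum_cons]
      have hp : ∏ i ∈ s, f i ≤ 1 :=
        Finset.prod_le_one (fun _ _ => zero_le') fun i _ => hf i
      calc (1 : ℝ≥0∞) ≤ (∏ i ∈ s, f i) + ∑ i ∈ s, g i := ih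
        _ ≤ (f a + g a) * (∏ i ∈ s, f i) + ∑ i ∈ s, g i := by
            gcongr
            calc ∏ i ∈ s, f i = 1 * ∏ i ∈ s, f i := (one_mul _).symm
              _ ≤ (f a + g a) * ∏ i ∈ s, f i := by gcongr; exact hfg a
        _ = f a * (∏ i ∈ s, f i) + (g a * (∏ i ∈ s, f i) + ∑ i ∈ s, g i) := by ring
        _ ≤ f a * (∏ i ∈ s, f i) + (g a + ∑ i ∈ s, g i) := by
            gcongr
            exact mul_le_of_le_one_right (zero_le') hp

end AuxProdLemmas

/-- **Formula (1-1).** Under the assumptions of Proposition 1.6, the measure of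
`𝐓 𝐁ⁿ ∩ 𝐁ⁿ` equals `(∏_{j<n} γ (B j))⁻¹ ⬝ ∏_{j≥n} γ (B j ∩ T (B j)) / γ (B j)`, and the
ratio `μ (𝐓 𝐁ⁿ ∩ 𝐁ⁿ) / μ 𝐁ⁿ` tends to `1`. -/
theorem measure_prodMap_tailCylinder_inter {Y : Type*} [MeasurableSpace Y]
    [StandardBorelSpace Y]
    (γ : Measure Y) [IsProbabilityMeasure γ] (hna : ∀ y : Y, γ {y} = 0)
    (B : ℕ → Set Y) (hBm : ∀ n, MeasurableSet (B n)) (hBpos : ∀ n, 0 < γ (B n))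
    (T : Y ≃ᵐ Y) (hT : MeasurePreserving T γ γ)
    (hsum : (∑' n, γ (symmDiff (B n) (⇑T '' B n)) / γ (B n)) ≠ ∞)
    (μ : Measure (ℕ → Y))
    (hcyl : ∀ (m : ℕ) (C : ℕ → Set Y), (∀ j, MeasurableSet (C j)) →
      (∀ j, m ≤ j → C j = B j) →
      μ {x : ℕ → Y | ∀ j, x j ∈ C j} = ∏ j ∈ Finset.range m, γ (C j) / γ (B j))
    (hsupp : μ ((⋃ n, tailCylinder B n)ᶜ) = 0) :
    (∀ n : ℕ,
      μ ((fun (x : ℕ → Y) (j : ℕ) => T (x j)) '' tailCylinder B n ∩ tailCylinder B n)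
        = (∏ j ∈ Finset.range n, γ (B j))⁻¹ *
            ∏' k : ℕ, γ (B (n + k) ∩ ⇑T '' B (n + k)) / γ (B (n + k))) ∧
      Tendsto (fun n : ℕ =>
          μ ((fun (x : ℕ → Y) (j : ℕ) => T (x j)) '' tailCylinder B n ∩ tailCylinder B n)
            / μ (tailCylinder B n)) atTop (𝓝 1) := by
  classical
  have hγB_ne_top : ∀ j, γ (B j) ≠ ∞ := fun j => (measure_lt_top γ _).ne
  have hγB_ne_zero : ∀ j, γ (B j) ≠ 0 := fun j => (hBpos j).ne'
  have hTm : ∀ s : Set Y, MeasurableSet s → MeasurableSet (⇑T '' s) := by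
    intro s hs
    rw [T.image_eq_preimage_symm]
    exact T.symm.measurable hs
  set D : ℕ → Set Y := fun j => B j ∩ ⇑T '' B j with hDdef
  have hDm : ∀ j, MeasurableSet (D j) := fun j => (hBm j).inter (hTm _ (hBm j))
  set a : ℕ → ℝ≥0∞ := fun j => γ (D j) / γ (B j) with hadef
  have ha_le_one : ∀ j, a j ≤ 1 := by
    intro j
    rw [hadef]
    calc γ (D j) / γ (B j) ≤ γ (B j) / γ (B j) :=
          ENNReal.div_le_div_right (measure_mono Set.inter_subset_left) _
      _ = 1 := ENNReal.div_self (hγB_ne_zero j) (hγB_ne_top j)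
  set ε : ℕ → ℝ≥0∞ := fun j => γ (symmDiff (B j) (⇑T '' B j)) / γ (B j) with hεdef
  have hεsum : (∑' n, ε n) ≠ ∞ := hsum
  have h1le : ∀ j, 1 ≤ a j + ε j := by
    intro j
    have hsub : B j ⊆ D j ∪ symmDiff (B j) (⇑T '' B j) := by
      intro y hy
      by_cases hyT : y ∈ ⇑T '' B j
      · exact Or.inl ⟨hy, hyT⟩
      · refine Or.inr ?_
        rw [Set.mem_symmDiff]
        exact Or.inl ⟨hy, hyT⟩
    have hle : γ (B j) ≤ γ (D j) + γ (symmDiff (B j) (⇑T '' B j)) :=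
      (measure_mono hsub).trans (measure_union_le _ _)
    calc (1 : ℝ≥0∞) = γ (B j) / γ (B j) :=
          (ENNReal.div_self (hγB_ne_zero j) (hγB_ne_top j)).symm
      _ ≤ (γ (D j) + γ (symmDiff (B j) (⇑T '' B j))) / γ (B j) :=
          ENNReal.div_le_div_right hle _
      _ = a j + ε j := ENNReal.add_div
  -- the normalizing constant
  have hP0 : ∀ n, (∏ j ∈ Finset.range n, γ (B j)) ≠ 0 := fun n =>
    Finset.prod_ne_zero_iff.mpr fun j _ => hγB_ne_zero j
  have hPtop : ∀ n, (∏ j ∈ Finset.range n, γ (B j)) ≠ ∞ := fun n =>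
    (ENNReal.prod_lt_top fun j _ => (measure_lt_top γ _)).ne
  have hCi0 : ∀ n, (∏ j ∈ Finset.range n, γ (B j))⁻¹ ≠ 0 := fun n =>
    ENNReal.inv_ne_zero.mpr (hPtop n)
  have hCitop : ∀ n, (∏ j ∈ Finset.range n, γ (B j))⁻¹ ≠ ∞ := fun n =>
    ENNReal.inv_ne_top.mpr (hP0 n)
  have prod_inv : ∀ n, (∏ j ∈ Finset.range n, (γ (B j))⁻¹)
      = (∏ j ∈ Finset.range n, γ (B j))⁻¹ := by
    intro n
    induction n with
    | zero => simp
    | succ k ih =>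
        rw [Finset.prod_range_succ, Finset.prod_range_succ, ih,
          ENNReal.mul_inv (Or.inl (hP0 k)) (Or.inl (hPtop k))]
  -- cylinder measures
  have key : ∀ n m : ℕ,
      μ {x : ℕ → Y | ∀ j, x j ∈
          (fun j => if j < n then Set.univ else if j < n + m then D j else B j) j}
        = (∏ j ∈ Finset.range n, γ (B j))⁻¹ * ∏ i ∈ Finset.range m, a (n + i) := by
    intro n m
    set C : ℕ → Set Y := fun j => if j < n then Set.univ else if j < n + m then D j else B j
      with hCdef
    have hCm : ∀ j, MeasurableSet (C j) := by
      intro j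
      rw [hCdef]
      dsimp only
      split
      · exact MeasurableSet.univ
      · split
        · exact hDm j
        · exact hBm j
    have hCB : ∀ j, n + m ≤ j → C j = B j := by
      intro j hj
      rw [hCdef]
      dsimp only
      rw [if_neg (by omega), if_neg (by omega)]
    rw [hcyl (n + m) C hCm hCB, Finset.prod_range_add]
    congr 1
    · rw [← prod_inv n]
      refine Finset.prod_congr rfl fun j hj => ?_
      rw [Finset.mem_range] at hj
      rw [hCdef]
      dsimp only
      rw [if_pos hj, measure_univ, one_div]
    · refine Finset.prod_congr rfl fun i hi => ?_
      rw [Finset.mem_range] at hi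
      rw [hCdef, hadef]
      dsimp only
      rw [if_neg (by omega), if_pos (by omega)]
  -- the formula
  have hformula : ∀ n : ℕ,
      μ ((fun (x : ℕ → Y) (j : ℕ) => T (x j)) '' tailCylinder B n ∩ tailCylinder B n)
        = (∏ j ∈ Finset.range n, γ (B j))⁻¹ * ∏' k : ℕ, a (n + k) := by
    intro n
    have hset : (fun (x : ℕ → Y) (j : ℕ) => T (x j)) '' tailCylinder B n ∩ tailCylinder B n
        = {x : ℕ → Y | ∀ j, n ≤ j → x j ∈ D j} := by
      ext x
      simp only [Set.mem_inter_iff, Set.mem_image, tailCylinder, Set.mem_setOf_eq, hDdef]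
      constructor
      · rintro ⟨⟨z, hz, rfl⟩, hx2⟩ j hj
        exact ⟨hx2 j hj, ⟨z j, hz j hj, rfl⟩⟩
      · intro h
        refine ⟨⟨fun j => T.symm (x j), fun j hj => ?_, funext fun j => T.apply_symm_apply _⟩,
          fun j hj => (h j hj).1⟩
        obtain ⟨w, hw, hwx⟩ := (h j hj).2
        show T.symm (x j) ∈ B j
        rw [← hwx, T.symm_apply_apply]
        exact hw
    set F : ℕ → Set (ℕ → Y) := fun m => {x : ℕ → Y | ∀ j, x j ∈
        (fun j => if j < n then Set.univ else if j < n + m then D j else B j) j} with hFdef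
    have hFmeas : ∀ m, MeasurableSet (F m) := by
      intro m
      have : F m = ⋂ j, (fun x : ℕ → Y => x j) ⁻¹'
          (if j < n then Set.univ else if j < n + m then D j else B j) := by
        ext x
        simp [hFdef, Set.mem_iInter]
      rw [this]
      refine MeasurableSet.iInter fun j => (measurable_pi_apply j) ?_
      split
      · exact MeasurableSet.univ
      · split
        · exact hDm j
        · exact hBm j
    have hFanti : Antitone F := by
      intro m m' hmm x hx j
      have hxj : x j ∈ (if j < n then Set.univ else if j < n + m' then D j else B j) := hx j
      show x j ∈ (if j < n then Set.univ else if j < n + m then D j else B j)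
      by_cases h1 : j < n
      · rw [if_pos h1]; trivial
      · rw [if_neg h1] at hxj ⊢
        by_cases h2 : j < n + m
        · rw [if_pos h2]
          rw [if_pos (by omega)] at hxj
          exact hxj
        · rw [if_neg h2]
          by_cases h3 : j < n + m'
          · rw [if_pos h3] at hxj
            exact hxj.1
          · rw [if_neg h3] at hxj
            exact hxj
    have hinter : ⋂ m, F m = {x : ℕ → Y | ∀ j, n ≤ j → x j ∈ D j} := by
      ext x
      simp only [Set.mem_iInter, Set.mem_setOf_eq, hFdef]
      constructor
      · intro h j hj
        have := h (j + 1 - n) j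
        rwa [if_neg (by omega), if_pos (by omega)] at this
      · intro h m j
        by_cases h1 : j < n
        · rw [if_pos h1]; trivial
        · rw [if_neg h1]
          by_cases h2 : j < n + m
          · rw [if_pos h2]
            exact h j (by omega)
          · rw [if_neg h2]
            exact (h j (by omega)).1
    have ht1 : Tendsto (μ ∘ F) atTop (𝓝 (μ (⋂ m, F m))) := by
      refine tendsto_measure_iInter_atTop (fun m => (hFmeas m).nullMeasurableSet) hFanti ⟨0, ?_⟩
      rw [key n 0]
      simp only [Finset.range_zero, Finset.prod_empty, mul_one]
      exact hCitop n
    have ht2 : Tendsto (μ ∘ F) atTop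
        (𝓝 ((∏ j ∈ Finset.range n, γ (B j))⁻¹ * ∏' k : ℕ, a (n + k))) := by
      have hq : Tendsto (fun m => ∏ i ∈ Finset.range m, a (n + i)) atTop
          (𝓝 (∏' k : ℕ, a (n + k))) :=
        myaux_tendsto_range_prod fun i => ha_le_one _
      have := ENNReal.Tendsto.const_mul hq (Or.inr (hCitop n))
      refine this.congr fun m => ?_
      exact (key n m).symm
    rw [hset, ← hinter]
    exact tendsto_nhds_unique ht1 ht2
  -- measure of tail cylinder
  have htail : ∀ n : ℕ, μ (tailCylinder B n) = (∏ j ∈ Finset.range n, γ (B j))⁻¹ := by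
    intro n
    have hset : tailCylinder B n
        = {x : ℕ → Y | ∀ j, x j ∈ (fun j => if j < n then Set.univ else B j) j} := by
      ext x
      simp only [tailCylinder, Set.mem_setOf_eq]
      constructor
      · intro h j
        show x j ∈ (if j < n then Set.univ else B j)
        by_cases h1 : j < n
        · rw [if_pos h1]; trivial
        · rw [if_neg h1]; exact h j (by omega)
      · intro h j hj
        have := h j
        rwa [if_neg (by omega)] at this
    have hCm : ∀ j, MeasurableSet (if j < n then (Set.univ : Set Y) else B j) := by
      intro j
      split
      · exact MeasurableSet.univ
      · exact hBm j
    rw [hset, hcyl n _ hCm (fun j hj => if_neg (by omega)), ← prod_inv n]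
    refine Finset.prod_congr rfl fun j hj => ?_
    rw [Finset.mem_range] at hj
    rw [if_pos hj, measure_univ, one_div]
  refine ⟨hformula, ?_⟩
  have hratio : ∀ n : ℕ,
      μ ((fun (x : ℕ → Y) (j : ℕ) => T (x j)) '' tailCylinder B n ∩ tailCylinder B n)
        / μ (tailCylinder B n) = ∏' k : ℕ, a (n + k) := by
    intro n
    rw [hformula n, htail n, div_eq_mul_inv, mul_comm ((∏ j ∈ Finset.range n, γ (B j))⁻¹),
      mul_assoc, ENNReal.mul_inv_cancel (hCi0 n) (hCitop n), mul_one]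
  -- convergence of the ratio
  have hRt : Tendsto (fun n => ∑' k, ε (n + k)) atTop (𝓝 0) := by
    have h := ENNReal.tendsto_sum_nat_add ε hεsum
    refine h.congr fun n => ?_
    exact tsum_congr fun k => by rw [add_comm]
  have hlow : ∀ n, 1 ≤ (∏' k : ℕ, a (n + k)) + ∑' k, ε (n + k) := by
    intro n
    rw [myaux_tprod_eq_iInf fun i => ha_le_one _]
    have hall : ∀ s : Finset ℕ, (1 : ℝ≥0∞) - (∑' k, ε (n + k)) ≤ ∏ i ∈ s, a (n + i) := by
      intro s
      rw [tsub_le_iff_right]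
      calc (1 : ℝ≥0∞) ≤ (∏ i ∈ s, a (n + i)) + ∑ i ∈ s, ε (n + i) :=
            myaux_one_le_prod_add_sum (fun i => ha_le_one _) (fun i => h1le _) s
        _ ≤ (∏ i ∈ s, a (n + i)) + ∑' k, ε (n + k) := by
            gcongr
            exact ENNReal.sum_le_tsum s
    have h2 : (1 : ℝ≥0∞) - (∑' k, ε (n + k)) ≤ ⨅ s : Finset ℕ, ∏ i ∈ s, a (n + i) :=
      le_iInf hall
    rwa [tsub_le_iff_right] at h2
  have hub : ∀ n, (∏' k : ℕ, a (n + k)) ≤ 1 := by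
    intro n
    rw [myaux_tprod_eq_iInf fun i => ha_le_one _]
    exact iInf_le_of_le ∅ (by simp)
  have hlowt : Tendsto (fun n => (1 : ℝ≥0∞) - ∑' k, ε (n + k)) atTop (𝓝 1) := by
    have h : Tendsto (fun n => (1 : ℝ≥0∞) - ∑' k, ε (n + k)) atTop (𝓝 (1 - 0)) :=
      ((ENNReal.continuous_sub_left one_ne_top).tendsto 0).comp hRt
    simpa using h
  have hQ1 : Tendsto (fun n => ∏' k : ℕ, a (n + k)) atTop (𝓝 1) := by
    refine tendsto_of_tendsto_of_tendsto_of_le_of_le hlowt tendsto_const_nhds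
      (fun n => ?_) hub
    exact tsub_le_iff_right.mpr (hlow n)
  exact hQ1.congr fun n => (hratio n).symm
end
end

section
/- Let G be a noncompact locally compact second countable group and let S = (S_g)_{g∈G} be a measure-preserving Borel G-action on an infinite σ-finite standard measure space (Z, κ). Let Z_1 ⊆ Z_2 ⊆ ⋯ be measurable sets of finite measure with ⋃_n Z_n = Z, and for each n let 𝒫_n be a finite partition of Z_n into measurable subsets of equal measure such that 𝒫_{n+1} refines 𝒫_n and ⋁_n 𝒫_n is dense in the ring of finite-measure sets (for every measurable B of finite measure and ε > 0 there is n and a 𝒫_n-measurable set B' with κ(B △ B') < ε). Assume that for every n and every pair of atoms A, B of 𝒫_n, there exist finitely many g_1, …, g_l ∈ G and mutually disjoint measurable subsets A_1, …, A_l of A such that the sets S_{g_1}A_1, …, S_{g_l}A_l are mutually disjoint, their union is contained in B, and κ(A_1 ∪ ⋯ ∪ A_l) > 0.1·κ(A). Then S is ergodic. -/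
open MeasureTheory Filter Topology Set ENNReal

noncomputable section

/-- **Proposition 2.1(ii).** An ergodicity criterion for measure-preserving actions in terms
of a refining dense sequence of finite partitions into sets of equal measure: if more than a
tenth (in measure) of every atom can be moved disjointly into any other given atom of the same
partition by finitely many group elements, then the action is ergodic. -/
theorem ergodic_of_partitions {G : Type*} [Group G]
    [TopologicalSpace G] [IsTopologicalGroup G] [LocallyCompactSpace G]
    [SecondCountableTopology G] [NoncompactSpace G] [MeasurableSpace G] [BorelSpace G]
    {Z : Type*} [MeasurableSpace Z] [StandardBorelSpace Z]
    (κ : Measure Z) [SigmaFinite κ] (hinf : κ Set.univ = ∞)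
    (S : G → Z → Z) (hS : IsMPAction κ S)
    (Zn : ℕ → Set Z) (hZmono : Monotone Zn) (hZm : ∀ n, MeasurableSet (Zn n))
    (hZfin : ∀ n, κ (Zn n) ≠ ∞) (hZU : (⋃ n, Zn n) = Set.univ)
    (P : ℕ → Finset (Set Z))
    (hPm : ∀ n, ∀ A ∈ P n, MeasurableSet A)
    (hPdisj : ∀ n, ∀ A ∈ P n, ∀ B ∈ P n, A ≠ B → Disjoint A B)
    (hPcover : ∀ n, ⋃₀ (↑(P n) : Set (Set Z)) = Zn n)
    (hPeq : ∀ n, ∀ A ∈ P n, ∀ B ∈ P n, κ A = κ B)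
    (hPrefine : ∀ n, ∀ A ∈ P (n + 1), ∀ B ∈ P n, A ⊆ B ∨ Disjoint A B)
    (hPdense : ∀ B : Set Z, MeasurableSet B → κ B ≠ ∞ → ∀ ε : ℝ≥0∞, 0 < ε →
      ∃ n, ∃ s ⊆ P n, κ (symmDiff B (⋃₀ (↑s : Set (Set Z)))) < ε)
    (hmain : ∀ n, ∀ A ∈ P n, ∀ B ∈ P n,
      ∃ (l : ℕ) (g : Fin l → G) (As : Fin l → Set Z),
        (∀ i, MeasurableSet (As i)) ∧ (∀ i, As i ⊆ A) ∧
        (∀ i j, i ≠ j → Disjoint (As i) (As j)) ∧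
        (∀ i j, i ≠ j → Disjoint (S (g i) '' As i) (S (g j) '' As j)) ∧
        (⋃ i, S (g i) '' As i) ⊆ B ∧
        κ A / 10 < κ (⋃ i, As i)) :
    IsErgodicAction κ S := by
  
  classical
  -- basic facts about the action
  have hSmeas : ∀ g : G, Measurable (S g) := fun g => (hS.2 g).measurable
  have himg : ∀ (g : G) (X : Set Z), S g '' X = S g⁻¹ ⁻¹' X := by
    intro g X
    ext x
    constructor
    · rintro ⟨y, hy, rfl⟩
      show S g⁻¹ (S g y) ∈ X
      rw [← hS.1.2.2, inv_mul_cancel, hS.1.2.1]; exact hy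
    · intro hx
      exact ⟨S g⁻¹ x, hx, by rw [← hS.1.2.2, mul_inv_cancel, hS.1.2.1]⟩
  have himgMeas : ∀ (g : G) (X : Set Z), MeasurableSet X → MeasurableSet (S g '' X) := by
    intro g X hX; rw [himg]; exact hSmeas g⁻¹ hX
  have himgMeasure : ∀ (g : G) (X : Set Z), MeasurableSet X → κ (S g '' X) = κ X := by
    intro g X hX; rw [himg]; exact (hS.2 g⁻¹).measure_preimage hX.nullMeasurableSet
  -- atoms are inside Zn
  have hsubZ : ∀ n, ∀ C ∈ P n, C ⊆ Zn n := fun n C hC =>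
    (hPcover n) ▸ Set.subset_sUnion_of_mem hC
  -- refinement lemma across levels
  have L : ∀ N n, n ≤ N → ∀ C ∈ P N, ∀ D ∈ P n, C ⊆ D ∨ Disjoint C D := by
    intro N
    induction N with
    | zero =>
      intro n hn C hC D hD
      interval_cases n
      rcases eq_or_ne C D with rfl | hne
      · exact Or.inl subset_rfl
      · exact Or.inr (hPdisj 0 C hC D hD hne)
    | succ N ih =>
      intro n hn C hC D hD
      rcases eq_or_lt_of_le hn with rfl | hlt
      · rcases eq_or_ne C D with rfl | hne
        · exact Or.inl subset_rfl
        · exact Or.inr (hPdisj _ C hC D hD hne)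
      · have hn' : n ≤ N := Nat.lt_succ_iff.mp hlt
        by_cases hd : ∀ D' ∈ P N, Disjoint C D'
        · refine Or.inr (Set.disjoint_left.mpr ?_)
          intro x hxC hxD
          have hxZ : x ∈ Zn N := hZmono hn' (hsubZ n D hD hxD)
          rw [← hPcover N] at hxZ
          obtain ⟨D', hD', hxD'⟩ := hxZ
          exact Set.disjoint_left.mp (hd D' hD') hxC hxD'
        · push_neg at hd
          obtain ⟨D', hD', hCD'⟩ := hd
          rcases hPrefine N C hC D' hD' with hsub | hdis
          · rcases ih n hn' D' hD' D hD with h1 | h1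
            · exact Or.inl (hsub.trans h1)
            · exact Or.inr (h1.mono_left hsub)
          · exact absurd hdis hCD'
  -- lifting a partial union to a higher level
  have lift : ∀ n N, n ≤ N → ∀ s : Finset (Set Z), s ⊆ P n →
      ∃ t : Finset (Set Z), t ⊆ P N ∧
        ⋃₀ (↑t : Set (Set Z)) = ⋃₀ (↑s : Set (Set Z)) := by
    intro n N hn s hs
    refine ⟨(P N).filter (fun C => C ⊆ ⋃₀ (↑s : Set (Set Z))), Finset.filter_subset _ _, ?_⟩
    apply Set.Subset.antisymm
    · rintro x ⟨C, hC, hxC⟩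
      have := Finset.mem_filter.mp (Finset.mem_coe.mp hC)
      exact this.2 hxC
    · rintro x ⟨D, hD, hxD⟩
      have hDs : D ∈ P n := hs (Finset.mem_coe.mp hD)
      have hxZ : x ∈ Zn N := hZmono hn (hsubZ n D hDs hxD)
      rw [← hPcover N] at hxZ
      obtain ⟨C, hC, hxC⟩ := hxZ
      rcases L N n hn C (Finset.mem_coe.mp hC) D hDs with hsub | hdis
      · exact ⟨C, Finset.mem_coe.mpr (Finset.mem_filter.mpr
          ⟨Finset.mem_coe.mp hC, hsub.trans (Set.subset_sUnion_of_mem hD)⟩), hxC⟩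
      · exact absurd hxD (Set.disjoint_left.mp hdis hxC)
  -- extraction of a good atom
  have extract : ∀ B' : Set Z, MeasurableSet B' → κ B' ≠ 0 → κ B' ≠ ∞ →
      ∀ (N : ℕ) (t : Finset (Set Z)), t ⊆ P N →
      κ (symmDiff B' (⋃₀ (↑t : Set (Set Z)))) < κ B' / 42 →
      ∃ C ∈ P N, κ (C \ B') < κ C / 20 := by
    intro B' hB'm hB'0 hB'top N t ht hsd
    by_contra hbad
    push_neg at hbad
    set U : Set Z := ⋃₀ (↑t : Set (Set Z)) with hU
    have hUb : U = ⋃ C ∈ t, C := by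
      rw [hU, Set.sUnion_eq_biUnion, Finset.set_biUnion_coe]
    have hUm : MeasurableSet U :=
      hU ▸ Set.Finite.measurableSet_sUnion t.finite_toSet (fun C hC => hPm N C (ht hC))
    have hmemm : ∀ C ∈ t, MeasurableSet C := fun C hC => hPm N C (ht hC)
    have hdisjt : Set.PairwiseDisjoint (↑t : Set (Set Z)) id := fun C hC D hD hne =>
      hPdisj N C (ht hC) D (ht hD) hne
    have hsum : κ U = ∑ C ∈ t, κ C := by
      rw [hUb]; exact measure_biUnion_finset hdisjt hmemm
    have hsum2 : κ (U \ B') = ∑ C ∈ t, κ (C \ B') := by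
      have : U \ B' = ⋃ C ∈ t, (C \ B') := by
        rw [hUb]; simp [Set.iUnion_diff]
      rw [this]
      exact measure_biUnion_finset
        (fun C hC D hD hne => (hdisjt hC hD hne).mono Set.diff_subset Set.diff_subset)
        (fun C hC => (hmemm C hC).diff hB'm)
    have h1 : κ U / 20 ≤ κ (U \ B') := by
      calc κ U / 20 = (∑ C ∈ t, κ C) * 20⁻¹ := by rw [hsum, div_eq_mul_inv]
        _ = ∑ C ∈ t, κ C * 20⁻¹ := Finset.sum_mul _ _ _
        _ ≤ ∑ C ∈ t, κ (C \ B') := Finset.sum_le_sum (fun C hC => by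
              rw [← div_eq_mul_inv]; exact hbad C (ht hC))
        _ = κ (U \ B') := hsum2.symm
    have hsub1 : U \ B' ⊆ symmDiff B' U := by
      rw [Set.symmDiff_def]; exact Set.subset_union_right
    have hsub2 : B' \ U ⊆ symmDiff B' U := by
      rw [Set.symmDiff_def]; exact Set.subset_union_left
    have hUlt : κ U < κ B' / 42 * 20 := by
      rw [← ENNReal.div_lt_iff (Or.inl (by norm_num)) (Or.inl (by norm_num))]
      exact lt_of_le_of_lt h1 (lt_of_le_of_lt (measure_mono hsub1) hsd)
    have hfinal : κ B' < 20 * (κ B' / 42) + κ B' / 42 := by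
      have hB'eq : κ B' = κ (B' ∩ U) + κ (B' \ U) := (measure_inter_add_diff B' hUm).symm
      calc κ B' = κ (B' ∩ U) + κ (B' \ U) := hB'eq
        _ ≤ κ U + κ (B' \ U) := add_le_add_left (measure_mono Set.inter_subset_right) _
        _ < κ B' / 42 * 20 + κ B' / 42 :=
            ENNReal.add_lt_add hUlt (lt_of_le_of_lt (measure_mono hsub2) hsd)
        _ = 20 * (κ B' / 42) + κ B' / 42 := by rw [mul_comm]
    refine absurd hfinal (not_lt.mpr ?_)
    rw [← add_one_mul]
    norm_num
    calc (21 : ℝ≥0∞) * (κ B' / 42) ≤ 21 * (κ B' / 21) :=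
        mul_le_mul_right (ENNReal.div_le_div_left (by norm_num) _) 21
      _ ≤ κ B' := ENNReal.mul_div_le
  -- the key arithmetic identity
  have harith : ∀ c : ℝ≥0∞, c / 20 + c / 20 = c / 10 := by
    intro c
    rw [ENNReal.div_add_div_same, ← two_mul, show (20 : ℝ≥0∞) = 2 * 10 by norm_num,
      ENNReal.mul_div_mul_left _ _ (by norm_num) (by norm_num)]
  -- start of the main argument
  intro A hAm hAinv
  by_contra hcon
  push_neg at hcon
  obtain ⟨hA0, hAc0⟩ := hcon
  have hex : ∀ X : Set Z, κ X ≠ 0 → ∃ n, κ (X ∩ Zn n) ≠ 0 := by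
    intro X h0
    by_contra h
    push_neg at h
    apply h0
    have hXeq : X = ⋃ n, X ∩ Zn n := by rw [← Set.inter_iUnion, hZU, Set.inter_univ]
    rw [hXeq]
    exact le_antisymm (le_trans (measure_iUnion_le _) (by simp [h])) zero_le
  obtain ⟨n₁, hA'0⟩ := hex A hA0
  obtain ⟨n₂, hB'0⟩ := hex Aᶜ hAc0
  set A' := A ∩ Zn n₁ with hA'def
  set B' := Aᶜ ∩ Zn n₂ with hB'def
  have hA'm : MeasurableSet A' := hAm.inter (hZm n₁)
  have hB'm : MeasurableSet B' := hAm.compl.inter (hZm n₂)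
  have hA'fin : κ A' ≠ ∞ :=
    fun h => hZfin n₁ (top_le_iff.mp (h ▸ measure_mono Set.inter_subset_right))
  have hB'fin : κ B' ≠ ∞ :=
    fun h => hZfin n₂ (top_le_iff.mp (h ▸ measure_mono Set.inter_subset_right))
  obtain ⟨na, sa, hsa, hda⟩ := hPdense A' hA'm hA'fin (κ A' / 42)
    (ENNReal.div_pos hA'0 (by norm_num))
  obtain ⟨nb, sb, hsb, hdb⟩ := hPdense B' hB'm hB'fin (κ B' / 42)
    (ENNReal.div_pos hB'0 (by norm_num))
  obtain ⟨ta, hta, htaU⟩ := lift na (max na nb) (le_max_left _ _) sa hsa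
  obtain ⟨tb, htb, htbU⟩ := lift nb (max na nb) (le_max_right _ _) sb hsb
  set N := max na nb
  obtain ⟨A₀, hA₀, hgoodA⟩ := extract A' hA'm hA'0 hA'fin N ta hta (by rw [htaU]; exact hda)
  obtain ⟨B₀, hB₀, hgoodB⟩ := extract B' hB'm hB'0 hB'fin N tb htb (by rw [htbU]; exact hdb)
  have hc : κ B₀ = κ A₀ := hPeq N B₀ hB₀ A₀ hA₀
  obtain ⟨l, g, As, hAsm, hAssub, hAsdisj, hImgdisj, hImgsub, hlt⟩ := hmain N A₀ hA₀ B₀ hB₀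
  set c := κ A₀ with hcdef
  set Ws : Fin l → Set Z := fun i => S (g i) '' (As i ∩ A) with hWsdef
  have hWm : ∀ i, MeasurableSet (Ws i) := fun i => himgMeas _ _ ((hAsm i).inter hAm)
  have hWd : Pairwise (Function.onFun Disjoint Ws) := fun i j hij =>
    (hImgdisj i j hij).mono (Set.image_mono Set.inter_subset_left)
      (Set.image_mono Set.inter_subset_left)
  have hWmeasure : ∀ i, κ (Ws i) = κ (As i ∩ A) := fun i =>
    himgMeasure _ _ ((hAsm i).inter hAm)
  set W := ⋃ i, Ws i with hWdef
  have hWsum : κ W = ∑' i, κ (As i ∩ A) := by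
    rw [hWdef, measure_iUnion hWd hWm]; exact tsum_congr hWmeasure
  have hWsubimg : W ⊆ ⋃ i, S (g i) '' As i :=
    Set.iUnion_mono fun i => Set.image_mono Set.inter_subset_left
  have hWA : κ (W \ A) = 0 := by
    have hsub : W \ A ⊆ ⋃ i, (S (g i) '' A \ A) := by
      rintro x ⟨hxW, hxA⟩
      obtain ⟨i, hx⟩ := Set.mem_iUnion.mp hxW
      exact Set.mem_iUnion.mpr ⟨i, Set.image_mono Set.inter_subset_right hx, hxA⟩
    refine measure_mono_null hsub ?_
    refine le_antisymm (le_trans (measure_iUnion_le _) ?_) zero_le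
    have hz : ∀ i : Fin l, κ (S (g i) '' A \ A) = 0 := fun i =>
      measure_mono_null (by rw [Set.symmDiff_def]; exact Set.subset_union_left) (hAinv (g i))
    simp [hz]
  have hWlt : κ W < c / 20 := by
    have h1 : κ W = κ (W ∩ A) := by
      have := measure_inter_add_diff (μ := κ) W hAm
      rw [hWA, add_zero] at this
      exact this.symm
    have h2 : W ∩ A ⊆ B₀ \ B' := by
      rintro x ⟨hxW, hxA⟩
      refine ⟨hImgsub (hWsubimg hxW), fun hxB' => hxB'.1 hxA⟩
    calc κ W = κ (W ∩ A) := h1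
      _ ≤ κ (B₀ \ B') := measure_mono h2
      _ < κ B₀ / 20 := hgoodB
      _ = c / 20 := by rw [hc]
  have hA₀lt : κ (A₀ \ A) < c / 20 := by
    refine lt_of_le_of_lt (measure_mono ?_) hgoodA
    exact Set.diff_subset_diff_right Set.inter_subset_left
  have hup : κ (⋃ i, As i) ≤ κ W + κ (A₀ \ A) := by
    have hAsd : Pairwise (Function.onFun Disjoint As) := fun i j hij => hAsdisj i j hij
    have hdiffsum : ∑' i, κ (As i \ A) ≤ κ (A₀ \ A) := by
      rw [← measure_iUnion (fun i j hij => (hAsd hij).mono Set.diff_subset Set.diff_subset)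
        (fun i => (hAsm i).diff hAm)]
      exact measure_mono (Set.iUnion_subset fun i => Set.diff_subset_diff_left (hAssub i))
    calc κ (⋃ i, As i) = ∑' i, κ (As i) := measure_iUnion hAsd hAsm
      _ = ∑' i, (κ (As i ∩ A) + κ (As i \ A)) :=
          tsum_congr fun i => (measure_inter_add_diff _ hAm).symm
      _ = (∑' i, κ (As i ∩ A)) + ∑' i, κ (As i \ A) := ENNReal.tsum_add
      _ ≤ κ W + κ (A₀ \ A) := add_le_add (le_of_eq hWsum.symm) hdiffsum
  have : c / 10 < c / 10 := by
    calc c / 10 < κ (⋃ i, As i) := hlt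
      _ ≤ κ W + κ (A₀ \ A) := hup
      _ < c / 20 + c / 20 := ENNReal.add_lt_add hWlt hA₀lt
      _ = c / 10 := harith c
  exact lt_irrefl _ this
end
end

section
/- Let G be a noncompact locally compact second countable group, (Y, γ) a standard nonatomic probability space, T = (T_g)_{g∈G} a γ-preserving Borel G-action, and 𝐁 = (B_n)_{n≥1} measurable subsets with γ(B_n) = 1/2 for all n, such that for every compact K ⊆ G, ∑_{n=1}^∞ sup_{g∈K} γ(T_g B_n △ B_n) < ∞. Let μ = γ^𝐁 on X = Y^ℕ and 𝐓_g := T_g × T_g × ⋯. Then each 𝐓_g preserves μ, μ(𝐁^n) = 2^n for every n (so μ(X) = ∞), and (𝐁^n)_{n≥1} is an exhausting 𝐓-Følner sequence: 𝐁^1 ⊆ 𝐁^2 ⊆ ⋯, ⋃_n 𝐁^n = X, and for every compact K ⊆ G, sup_{g∈K} μ(𝐓_g 𝐁^n △ 𝐁^n)/μ(𝐁^n) → 0 as n → ∞. -/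
open MeasureTheory Filter Topology Set ENNReal

noncomputable section

namespace RPaux

open MeasureTheory Filter Topology Set ENNReal

def cylSet {Y : Type*} (C : ℕ → Set Y) : Set (ℕ → Y) := {x : ℕ → Y | ∀ j, x j ∈ C j}

section Aux
set_option linter.unusedSectionVars false

variable {Y : Type*} [MeasurableSpace Y]

lemma cylSet_mble {C : ℕ → Set Y} (hC : ∀ j, MeasurableSet (C j)) :
    MeasurableSet (cylSet C) := by
  have h : cylSet C = ⋂ j, (fun x : ℕ → Y => x j) ⁻¹' C j := by
    ext x; simp [cylSet, Set.mem_iInter]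
  rw [h]
  exact MeasurableSet.iInter fun j => (measurable_pi_apply j) (hC j)

lemma cylSet_inter (C1 C2 : ℕ → Set Y) :
    cylSet C1 ∩ cylSet C2 = cylSet (fun j => C1 j ∩ C2 j) := by
  ext x; simp [cylSet, forall_and]

def cylQ (B : ℕ → Set Y) : Set (Set (ℕ → Y)) :=
  {S | ∃ C : ℕ → Set Y, (∀ j, MeasurableSet (C j)) ∧
    (∃ m, ∀ j, m ≤ j → C j = B j) ∧ S = cylSet C}

lemma prod_eventually_one {f : ℕ → ℝ≥0∞} {m k : ℕ} (h : ∀ p, m ≤ p → f p = 1) (hk : m ≤ k) :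
    ∏ p ∈ Finset.range k, f p = ∏ p ∈ Finset.range m, f p := by
  obtain ⟨d, rfl⟩ := Nat.exists_eq_add_of_le hk
  rw [Finset.prod_range_add]
  have h2 : ∀ i ∈ Finset.range d, f (m + i) = 1 := fun i _ => h _ (Nat.le_add_right _ _)
  rw [Finset.prod_congr rfl h2]
  simp

lemma tailCylinder_eq (B : ℕ → Set Y) (n : ℕ) :
    tailCylinder B n = cylSet (fun j => if j < n then univ else B j) := by
  ext x
  simp only [tailCylinder, cylSet, mem_setOf_eq]
  constructor
  · intro h j
    by_cases hj : j < n
    · simp [hj]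
    · simpa [hj] using h j (le_of_not_gt hj)
  · intro h j hj
    have := h j
    rwa [if_neg (not_lt.2 hj)] at this

lemma tailCylinder_mono (B : ℕ → Set Y) : Monotone (tailCylinder B) := by
  intro a b hab x hx j hj
  exact hx j (hab.trans hj)

lemma tailCylinder_mble {B : ℕ → Set Y} (hBm : ∀ n, MeasurableSet (B n)) (n : ℕ) :
    MeasurableSet (tailCylinder B n) := by
  rw [tailCylinder_eq]
  exact cylSet_mble fun j => by by_cases h : j < n <;> simp [h, hBm j]

lemma measure_inter_U (B : ℕ → Set Y) (μ : Measure (ℕ → Y))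
    (hsupp : μ ((⋃ n, tailCylinder B n)ᶜ) = 0) (s : Set (ℕ → Y)) :
    μ s = μ (s ∩ ⋃ n, tailCylinder B n) := by
  refine le_antisymm ?_ (measure_mono inter_subset_left)
  calc μ s ≤ μ (s ∩ ⋃ n, tailCylinder B n) + μ (s \ ⋃ n, tailCylinder B n) :=
        measure_le_inter_add_diff μ s _
    _ ≤ μ (s ∩ ⋃ n, tailCylinder B n) + μ ((⋃ n, tailCylinder B n)ᶜ) :=
        add_le_add_right (measure_mono fun x hx => hx.2) _
    _ = μ (s ∩ ⋃ n, tailCylinder B n) := by rw [hsupp, add_zero]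

lemma tendsto_measure_inter_tail (B : ℕ → Set Y) (μ : Measure (ℕ → Y)) (s : Set (ℕ → Y)) :
    Tendsto (fun n => μ (s ∩ tailCylinder B n)) atTop
      (𝓝 (μ (s ∩ ⋃ n, tailCylinder B n))) := by
  have h := tendsto_measure_iUnion_atTop (μ := μ)
    (s := fun n => s ∩ tailCylinder B n)
    (fun a b hab => inter_subset_inter_right _ (tailCylinder_mono B hab))
  rw [← inter_iUnion] at h
  exact h

variable (γ : Measure Y) [IsProbabilityMeasure γ] (B : ℕ → Set Y)

lemma div_B_self (hB : ∀ n, γ (B n) = 1/2) (j : ℕ) : γ (B j) / γ (B j) = 1 := by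
  rw [hB]; exact ENNReal.div_self (by simp) (by simp)

lemma div_B_univ (hB : ∀ n, γ (B n) = 1/2) (j : ℕ) : γ (univ : Set Y) / γ (B j) = 2 := by
  rw [hB, measure_univ]; simp

lemma div_B_eq (hB : ∀ n, γ (B n) = 1/2) (D : Set Y) (j : ℕ) :
    γ D / γ (B j) = 2 * γ D := by
  rw [hB, div_eq_mul_inv]
  norm_num [mul_comm]

lemma measure_tailCylinder (hB : ∀ n, γ (B n) = 1/2)
    (μ : Measure (ℕ → Y))
    (hcyl : ∀ (m : ℕ) (C : ℕ → Set Y), (∀ j, MeasurableSet (C j)) →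
      (∀ j, m ≤ j → C j = B j) → μ (cylSet C) = ∏ j ∈ Finset.range m, γ (C j) / γ (B j))
    (hBm : ∀ n, MeasurableSet (B n)) (n : ℕ) :
    μ (tailCylinder B n) = 2 ^ n := by
  rw [tailCylinder_eq]
  rw [hcyl n _ (fun j => by by_cases hj : j < n <;> simp [hj, hBm j])
      (fun j hj => if_neg (not_lt.2 hj))]
  rw [Finset.prod_congr rfl (fun j hj => ?_)]
  · rw [Finset.prod_const, Finset.card_range]
  · rw [if_pos (Finset.mem_range.1 hj), div_B_univ γ B hB]

/-- The key computation: the restricted-power measure of a cylinder whose tail coordinates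
are sets of measure 1/2 that are asymptotically close to the `B j`. -/
lemma tail_compute (hB : ∀ n, γ (B n) = 1/2) (hBm : ∀ n, MeasurableSet (B n))
    (μ : Measure (ℕ → Y))
    (hcyl : ∀ (m : ℕ) (C : ℕ → Set Y), (∀ j, MeasurableSet (C j)) →
      (∀ j, m ≤ j → C j = B j) → μ (cylSet C) = ∏ j ∈ Finset.range m, γ (C j) / γ (B j))
    (hsupp : μ ((⋃ n, tailCylinder B n)ᶜ) = 0)
    (D : ℕ → Set Y) (hDm : ∀ j, MeasurableSet (D j)) (m : ℕ)
    (hDhalf : ∀ j, m ≤ j → γ (D j) = 1/2)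
    (hDs : Tendsto (fun N => ∑' k, γ (B (k + N) \ D (k + N))) atTop (𝓝 0)) :
    μ (cylSet D) = ∏ j ∈ Finset.range m, γ (D j) / γ (B j) := by
  set A := cylSet D with hA
  set c := ∏ j ∈ Finset.range m, γ (D j) / γ (B j) with hc
  set U := ⋃ n, tailCylinder B n with hU
  set t : ℕ → ℝ≥0∞ := fun N => ∑' k, γ (B (k + N) \ D (k + N)) with ht
  have hf1 : ∀ p, m ≤ p → γ (D p) / γ (B p) = 1 := by
    intro p hp
    rw [hDhalf p hp, hB]
    exact ENNReal.div_self (by simp) (by simp)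
  have hcne : c ≠ ⊤ := by
    refine (lt_of_le_of_lt (Finset.prod_le_prod' (g := fun _ => (2:ℝ≥0∞)) ?_) ?_).ne
    · intro i _
      rw [div_B_eq γ B hB]
      calc 2 * γ (D i) ≤ 2 * 1 := by
            exact mul_le_mul_right prob_le_one _
        _ = 2 := mul_one 2
    · rw [Finset.prod_const]
      exact ENNReal.pow_lt_top (by norm_num)
  set E : ℕ → Set (ℕ → Y) := fun N => cylSet (fun j => if j < N then D j else B j) with hE
  have hEm : ∀ N, ∀ j, MeasurableSet (if j < N then D j else B j) := by
    intro N j; by_cases hj : j < N <;> simp [hj, hDm j, hBm j]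
  have hEeq : ∀ N, m ≤ N → μ (E N) = c := by
    intro N hN
    rw [hE, hcyl N _ (hEm N) (fun j hj => if_neg (not_lt.2 hj))]
    rw [Finset.prod_congr rfl (fun j hj => by rw [if_pos (Finset.mem_range.1 hj)])]
    exact prod_eventually_one hf1 hN
  have hEsub : ∀ N, E N ⊆ tailCylinder B N := by
    intro N x hx j hj
    have h2 : x j ∈ (if j < N then D j else B j) := hx j
    rwa [if_neg (not_lt.2 hj)] at h2
  have hsub2 : ∀ N, A ∩ tailCylinder B N = A ∩ E N := by
    intro N
    apply Subset.antisymm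
    · rintro x ⟨hxA, hxT⟩
      refine ⟨hxA, fun j => ?_⟩
      by_cases hj : j < N
      · simpa [hj] using hxA j
      · simpa [hj] using hxT j (le_of_not_gt hj)
    · rintro x ⟨hxA, hxE⟩
      exact ⟨hxA, hEsub N hxE⟩
  have hFbound : ∀ N, m ≤ N → μ (E N \ A) ≤ 2 * c * t N := by
    intro N hN
    set F : ℕ → Set (ℕ → Y) := fun j =>
      cylSet (fun p => if p = j then B j \ D j else if p < N then D p else B p) with hF
    have hFm : ∀ j p, MeasurableSet (if p = j then B j \ D j else if p < N then D p else B p) := by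
      intro j p
      by_cases h1 : p = j
      · simp [h1, (hBm j).diff (hDm j)]
      · by_cases h2 : p < N <;> simp [h1, h2, hDm p, hBm p]
    have hFval : ∀ j, N ≤ j → μ (F j) = c * (2 * γ (B j \ D j)) := by
      intro j hj
      rw [hF]
      rw [hcyl (j+1) _ (hFm j) (fun p hp => by
        have hpj : p ≠ j := by omega
        have hpN : ¬ p < N := by omega
        simp [hpj, hpN])]
      rw [Finset.prod_range_succ]
      have hlast : γ (if j = j then B j \ D j else if j < N then D j else B j) / γ (B j)
          = 2 * γ (B j \ D j) := by
        rw [if_pos rfl, div_B_eq γ B hB]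
      rw [hlast]
      congr 1
      have hstep : ∀ p ∈ Finset.range j,
          γ (if p = j then B j \ D j else if p < N then D p else B p) / γ (B p)
          = if p < N then γ (D p) / γ (B p) else 1 := by
        intro p hp
        have hpj : p ≠ j := (Finset.mem_range.1 hp).ne
        rw [if_neg hpj]
        by_cases h2 : p < N
        · simp [h2]
        · rw [if_neg h2, if_neg h2, div_B_self γ B hB]
      rw [Finset.prod_congr rfl hstep]
      have hone : ∀ p, m ≤ p → (if p < N then γ (D p) / γ (B p) else 1) = 1 := by
        intro p hp
        by_cases h2 : p < N
        · rw [if_pos h2]; exact hf1 p hp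
        · rw [if_neg h2]
      rw [prod_eventually_one hone (hN.trans hj)]
      refine Finset.prod_congr rfl fun p hp => ?_
      rw [if_pos (lt_of_lt_of_le (Finset.mem_range.1 hp) hN)]
    have hincl : E N \ A ⊆ ⋃ k, F (k + N) := by
      rintro x ⟨hxE, hxA⟩
      have : ∃ j, x j ∉ D j := by
        by_contra hcon
        push_neg at hcon
        exact hxA hcon
      obtain ⟨j, hj⟩ := this
      have hjN : ¬ j < N := by
        intro hlt
        exact hj (by simpa [hlt] using hxE j)
      have hjN' : N ≤ j := le_of_not_gt hjN
      refine mem_iUnion.2 ⟨j - N, ?_⟩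
      have hjeq : j - N + N = j := Nat.sub_add_cancel hjN'
      rw [hjeq]
      intro p
      show x p ∈ (if p = j then B j \ D j else if p < N then D p else B p)
      by_cases hpj : p = j
      · subst hpj
        rw [if_pos rfl]
        exact ⟨by simpa [hjN] using hxE p, hj⟩
      · rw [if_neg hpj]
        exact hxE p
    calc μ (E N \ A) ≤ ∑' k, μ (F (k + N)) := (measure_mono hincl).trans (measure_iUnion_le _)
      _ = ∑' k, c * (2 * γ (B (k + N) \ D (k + N))) := by
          refine tsum_congr fun k => hFval (k + N) (Nat.le_add_left _ _)
      _ = 2 * c * t N := by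
          simp_rw [← mul_assoc, mul_comm c 2]
          exact ENNReal.tsum_mul_left
  have hAU : μ A = μ (A ∩ U) := by
    refine le_antisymm ?_ (measure_mono inter_subset_left)
    calc μ A ≤ μ (A ∩ U) + μ (A \ U) := measure_le_inter_add_diff μ A U
      _ ≤ μ (A ∩ U) + μ Uᶜ := add_le_add_right (measure_mono fun x hx => hx.2) _
      _ = μ (A ∩ U) := by rw [hsupp, add_zero]
  have hmono2 : Monotone fun N => A ∩ tailCylinder B N :=
    fun a b hab => inter_subset_inter_right _ (tailCylinder_mono B hab)
  have hlim : Tendsto (fun N => μ (A ∩ tailCylinder B N)) atTop (𝓝 (μ (A ∩ U))) := by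
    have h := tendsto_measure_iUnion_atTop (μ := μ) hmono2
    rw [← inter_iUnion] at h
    exact h
  have hupper : μ (A ∩ U) ≤ c := by
    refine le_of_tendsto hlim (eventually_atTop.2 ⟨m, fun N hN => ?_⟩)
    rw [hsub2 N]
    exact (measure_mono inter_subset_right).trans_eq (hEeq N hN)
  have hlower : c ≤ μ (A ∩ U) := by
    have hlow : ∀ N, m ≤ N → c ≤ μ (A ∩ tailCylinder B N) + 2 * c * t N := by
      intro N hN
      calc c = μ (E N) := (hEeq N hN).symm
        _ ≤ μ (E N ∩ A) + μ (E N \ A) := measure_le_inter_add_diff μ _ _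
        _ ≤ μ (A ∩ tailCylinder B N) + 2 * c * t N :=
            add_le_add (le_of_eq (by rw [inter_comm, hsub2 N])) (hFbound N hN)
    have htend : Tendsto (fun N => μ (A ∩ tailCylinder B N) + 2 * c * t N) atTop
        (𝓝 (μ (A ∩ U) + 0)) := by
      refine Tendsto.add hlim ?_
      have h2 := ENNReal.Tendsto.const_mul (a := 2 * c) hDs
        (Or.inr (ENNReal.mul_ne_top (by norm_num) hcne))
      simpa using h2
    have := ge_of_tendsto htend (eventually_atTop.2 ⟨m, hlow⟩)
    simpa using this
  rw [hAU]
  exact le_antisymm hupper hlower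

/-- Uniqueness: a measure satisfying the cylinder formula and supported on the union of
the tail cylinders is unique. -/
lemma measure_eq_of_cyl (hB : ∀ n, γ (B n) = 1/2) (hBm : ∀ n, MeasurableSet (B n))
    (μ ν : Measure (ℕ → Y))
    (hcylμ : ∀ (m : ℕ) (C : ℕ → Set Y), (∀ j, MeasurableSet (C j)) →
      (∀ j, m ≤ j → C j = B j) → μ (cylSet C) = ∏ j ∈ Finset.range m, γ (C j) / γ (B j))
    (hcylν : ∀ (m : ℕ) (C : ℕ → Set Y), (∀ j, MeasurableSet (C j)) →
      (∀ j, m ≤ j → C j = B j) → ν (cylSet C) = ∏ j ∈ Finset.range m, γ (C j) / γ (B j))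
    (hsuppμ : μ ((⋃ n, tailCylinder B n)ᶜ) = 0)
    (hsuppν : ν ((⋃ n, tailCylinder B n)ᶜ) = 0) :
    μ = ν := by
  have hQm : ∀ S ∈ cylQ B, MeasurableSet S := by
    rintro S ⟨C, hCm, -, rfl⟩; exact cylSet_mble hCm
  have hQinter : ∀ S1 ∈ cylQ B, ∀ S2 ∈ cylQ B, S1 ∩ S2 ∈ cylQ B := by
    rintro S1 ⟨C1, h1m, ⟨m1, h1B⟩, rfl⟩ S2 ⟨C2, h2m, ⟨m2, h2B⟩, rfl⟩
    refine ⟨fun j => C1 j ∩ C2 j, fun j => (h1m j).inter (h2m j),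
      ⟨max m1 m2, fun j hj => ?_⟩, cylSet_inter C1 C2⟩
    show C1 j ∩ C2 j = B j
    rw [h1B j (le_of_max_le_left hj), h2B j (le_of_max_le_right hj), inter_self]
  have hPi : IsPiSystem (cylQ B) := fun S1 h1 S2 h2 _ => hQinter S1 h1 S2 h2
  have hTCQ : ∀ n, tailCylinder B n ∈ cylQ B := by
    intro n
    exact ⟨fun j => if j < n then univ else B j,
      fun j => by by_cases h : j < n <;> simp [h, hBm j],
      ⟨n, fun j hj => if_neg (not_lt.2 hj)⟩, tailCylinder_eq B n⟩
  have hQval : ∀ S ∈ cylQ B, μ S = ν S := by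
    rintro S ⟨C, hCm, ⟨m, hCB⟩, rfl⟩
    rw [hcylμ m C hCm hCB, hcylν m C hCm hCB]
  have hm'le : MeasurableSpace.generateFrom (cylQ B) ≤ (MeasurableSpace.pi : MeasurableSpace (ℕ → Y)) :=
    MeasurableSpace.generateFrom_le hQm
  have hTCm' : ∀ n, MeasurableSet[MeasurableSpace.generateFrom (cylQ B)] (tailCylinder B n) :=
    fun n => MeasurableSpace.measurableSet_generateFrom (hTCQ n)
  have hμTC : ∀ n, μ (tailCylinder B n) = 2 ^ n :=
    measure_tailCylinder γ B hB μ hcylμ hBm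
  have hνTC : ∀ n, ν (tailCylinder B n) = 2 ^ n :=
    measure_tailCylinder γ B hB ν hcylν hBm
  have hind : ∀ t : Set (ℕ → Y), MeasurableSet[MeasurableSpace.generateFrom (cylQ B)] t →
      ∀ n, μ (t ∩ tailCylinder B n) = ν (t ∩ tailCylinder B n) := by
    refine MeasurableSpace.induction_on_inter (m := MeasurableSpace.generateFrom (cylQ B))
      (C := fun t _ => ∀ n, μ (t ∩ tailCylinder B n) = ν (t ∩ tailCylinder B n))
      (s := cylQ B) rfl hPi (by simp) ?_ ?_ ?_
    · intro S hS n
      exact hQval _ (hQinter S hS _ (hTCQ n))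
    · intro t ht hInd n
      have htm : MeasurableSet[MeasurableSpace.pi] (t ∩ tailCylinder B n) :=
        (hm'le _ ht).inter (tailCylinder_mble hBm n)
      have h1 : tᶜ ∩ tailCylinder B n = tailCylinder B n \ (t ∩ tailCylinder B n) := by
        ext x
        simp only [mem_inter_iff, mem_compl_iff, mem_diff]
        tauto
      have hfinμ : μ (t ∩ tailCylinder B n) ≠ ⊤ := by
        refine ((measure_mono inter_subset_right).trans_eq (hμTC n)).trans_lt ?_ |>.ne
        exact ENNReal.pow_lt_top (by norm_num)
      have hfinν : ν (t ∩ tailCylinder B n) ≠ ⊤ := by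
        refine ((measure_mono inter_subset_right).trans_eq (hνTC n)).trans_lt ?_ |>.ne
        exact ENNReal.pow_lt_top (by norm_num)
      rw [h1, measure_diff (μ := μ) inter_subset_right htm.nullMeasurableSet hfinμ,
        measure_diff (μ := ν) inter_subset_right htm.nullMeasurableSet hfinν,
        hInd n, hμTC n, hνTC n]
    · intro f hdisj hfm hInd n
      rw [iUnion_inter, measure_iUnion ?_ ?_, measure_iUnion ?_ ?_]
      · exact tsum_congr fun i => hInd i n
      · exact hdisj.mono fun i j h => h.mono inter_subset_left inter_subset_left
      · exact fun i => (hm'le _ (hfm i)).inter (tailCylinder_mble hBm n)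
      · exact hdisj.mono fun i j h => h.mono inter_subset_left inter_subset_left
      · exact fun i => (hm'le _ (hfm i)).inter (tailCylinder_mble hBm n)
  have hamb : ∀ t : Set (ℕ → Y), MeasurableSet[MeasurableSpace.pi] t →
      ∀ n, MeasurableSet[MeasurableSpace.generateFrom (cylQ B)] (t ∩ tailCylinder B n) := by
    let 𝔪 : MeasurableSpace (ℕ → Y) :=
      { MeasurableSet' := fun s => ∀ n,
          MeasurableSet[MeasurableSpace.generateFrom (cylQ B)] (s ∩ tailCylinder B n)
        measurableSet_empty := fun n => by
          rw [empty_inter]; exact @MeasurableSet.empty _ (MeasurableSpace.generateFrom (cylQ B))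
        measurableSet_compl := fun s hs n => by
          have h1 : sᶜ ∩ tailCylinder B n = tailCylinder B n \ (s ∩ tailCylinder B n) := by
            ext x
            simp only [mem_inter_iff, mem_compl_iff, mem_diff]
            tauto
          rw [h1]
          exact (hTCm' n).diff (hs n)
        measurableSet_iUnion := fun f hf n => by
          rw [iUnion_inter]
          exact MeasurableSet.iUnion fun i => hf i n }
    have hle : (MeasurableSpace.pi : MeasurableSpace (ℕ → Y)) ≤ 𝔪 := by
      have hpi : (MeasurableSpace.pi : MeasurableSpace (ℕ → Y))
          = ⨆ i : ℕ, MeasurableSpace.comap (fun x : ℕ → Y => x i) ‹MeasurableSpace Y› := rfl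
      rw [hpi]
      refine iSup_le fun i => ?_
      intro s hs
      obtain ⟨E, hE, rfl⟩ := hs
      intro n
      refine MeasurableSpace.measurableSet_generateFrom ?_
      refine ⟨fun j => (if j = i then E else univ) ∩ (if j < n then univ else B j),
        fun j => MeasurableSet.inter
          (by by_cases h1 : j = i <;> simp [h1, hE])
          (by by_cases h2 : j < n <;> simp [h2, hBm j]),
        ⟨max (i+1) n, fun j hj => by
          have h1 : j ≠ i := by omega
          have h2 : ¬ j < n := by omega
          simp [h1, h2]⟩, ?_⟩
      ext x
      simp only [cylSet, mem_inter_iff, mem_setOf_eq, mem_preimage, tailCylinder]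
      constructor
      · rintro ⟨hxE, hxT⟩ j
        constructor
        · by_cases h1 : j = i
          · subst h1; simp [hxE]
          · simp [h1]
        · by_cases h2 : j < n
          · simp [h2]
          · simpa [h2] using hxT j (le_of_not_gt h2)
      · intro h
        constructor
        · have := (h i).1
          simpa using this
        · intro j hj
          have := (h j).2
          simpa [not_lt.2 hj] using this
    exact fun t ht => hle t ht
  refine Measure.ext fun s hs => ?_
  have hseq : ∀ n, μ (s ∩ tailCylinder B n) = ν (s ∩ tailCylinder B n) := by
    intro n
    have h1 := hind (s ∩ tailCylinder B n) (hamb s hs n) n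
    rwa [inter_assoc, inter_self] at h1
  have l1 := tendsto_measure_inter_tail B μ s
  have l2 := tendsto_measure_inter_tail B ν s
  have l2' : Tendsto (fun n => μ (s ∩ tailCylinder B n)) atTop
      (𝓝 (ν (s ∩ ⋃ n, tailCylinder B n))) := l2.congr fun n => (hseq n).symm
  have hUeq : μ (s ∩ ⋃ n, tailCylinder B n) = ν (s ∩ ⋃ n, tailCylinder B n) :=
    tendsto_nhds_unique l1 l2'
  rw [measure_inter_U B μ hsuppμ s, measure_inter_U B ν hsuppν s, hUeq]

/-- Measure of the cylinder with one "bad" coordinate `j ≥ n`, free coordinates below `n`. -/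
lemma measure_badCyl (hB : ∀ n, γ (B n) = 1/2) (hBm : ∀ n, MeasurableSet (B n))
    (μ : Measure (ℕ → Y))
    (hcyl : ∀ (m : ℕ) (C : ℕ → Set Y), (∀ j, MeasurableSet (C j)) →
      (∀ j, m ≤ j → C j = B j) → μ (cylSet C) = ∏ j ∈ Finset.range m, γ (C j) / γ (B j))
    (n j : ℕ) (hnj : n ≤ j) (D : Set Y) (hD : MeasurableSet D) :
    μ (cylSet (fun p => if p = j then D else if p < n then univ else B p))
      = 2 ^ n * (2 * γ D) := by
  rw [hcyl (j+1) _ (fun p => by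
      by_cases h1 : p = j
      · simp [h1, hD]
      · by_cases h2 : p < n <;> simp [h1, h2, hBm p])
    (fun p hp => by
      have h1 : p ≠ j := by omega
      have h2 : ¬ p < n := by omega
      simp [h1, h2])]
  rw [Finset.prod_range_succ]
  have hlast : γ (if j = j then D else if j < n then univ else B j) / γ (B j) = 2 * γ D := by
    rw [if_pos rfl, div_B_eq γ B hB]
  rw [hlast]
  congr 1
  have hstep : ∀ p ∈ Finset.range j,
      γ (if p = j then D else if p < n then univ else B p) / γ (B p)
        = if p < n then (2:ℝ≥0∞) else 1 := by
    intro p hp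
    have hpj : p ≠ j := (Finset.mem_range.1 hp).ne
    rw [if_neg hpj]
    by_cases h2 : p < n
    · rw [if_pos h2, if_pos h2, div_B_univ γ B hB]
    · rw [if_neg h2, if_neg h2, div_B_self γ B hB]
  rw [Finset.prod_congr rfl hstep]
  have hone : ∀ p, n ≤ p → (if p < n then (2:ℝ≥0∞) else 1) = 1 :=
    fun p hp => if_neg (not_lt.2 hp)
  rw [prod_eventually_one hone hnj]
  rw [Finset.prod_congr rfl (fun p hp => if_pos (Finset.mem_range.1 hp)),
    Finset.prod_const, Finset.card_range]

/-- Bound on the part of `tailCylinder B n` escaping `tailCylinder S M`. -/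
lemma measure_tail_diff_le (hB : ∀ n, γ (B n) = 1/2) (hBm : ∀ n, MeasurableSet (B n))
    (μ : Measure (ℕ → Y))
    (hcyl : ∀ (m : ℕ) (C : ℕ → Set Y), (∀ j, MeasurableSet (C j)) →
      (∀ j, m ≤ j → C j = B j) → μ (cylSet C) = ∏ j ∈ Finset.range m, γ (C j) / γ (B j))
    (S : ℕ → Set Y) (hS : ∀ j, MeasurableSet (S j)) (n M : ℕ) (hnM : n ≤ M) :
    μ (tailCylinder B n \ tailCylinder S M)
      ≤ 2 ^ n * (2 * ∑' k, γ (B (k + M) \ S (k + M))) := by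
  have hincl : tailCylinder B n \ tailCylinder S M ⊆
      ⋃ k, cylSet (fun p => if p = k + M then B (k + M) \ S (k + M)
        else if p < n then univ else B p) := by
    rintro x ⟨hxB, hxS⟩
    have hex : ∃ j, M ≤ j ∧ x j ∉ S j := by
      by_contra hcon
      push_neg at hcon
      exact hxS fun j hj => hcon j hj
    obtain ⟨j, hjM, hj⟩ := hex
    refine mem_iUnion.2 ⟨j - M, ?_⟩
    have hjeq : j - M + M = j := Nat.sub_add_cancel hjM
    rw [hjeq]
    intro p
    show x p ∈ (if p = j then B j \ S j else if p < n then univ else B p)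
    by_cases hpj : p = j
    · subst hpj
      rw [if_pos rfl]
      exact ⟨hxB p (hnM.trans hjM), hj⟩
    · rw [if_neg hpj]
      by_cases h2 : p < n
      · simp [h2]
      · rw [if_neg h2]
        exact hxB p (le_of_not_gt h2)
  calc μ (tailCylinder B n \ tailCylinder S M)
      ≤ ∑' k, μ (cylSet (fun p => if p = k + M then B (k + M) \ S (k + M)
          else if p < n then univ else B p)) :=
        (measure_mono hincl).trans (measure_iUnion_le _)
    _ = ∑' k, 2 ^ n * (2 * γ (B (k + M) \ S (k + M))) := by
        refine tsum_congr fun k => ?_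
        exact measure_badCyl γ B hB hBm μ hcyl n (k + M) (hnM.trans (Nat.le_add_left _ _))
          _ ((hBm _).diff (hS _))
    _ = 2 ^ n * (2 * ∑' k, γ (B (k + M) \ S (k + M))) := by
        rw [ENNReal.tsum_mul_left]
        congr 1
        rw [ENNReal.tsum_mul_left]

end Aux

end RPaux

/-- **From the proof of Theorem B.** The product maps `𝐓 g = T g × T g × ⋯` preserve the
restricted infinite power `μ = γ^𝐁`, `μ 𝐁ⁿ = 2ⁿ` (so `μ` is infinite), and the sets `𝐁ⁿ`
form an exhausting `𝐓`-Følner sequence. -/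
theorem restrictedPower_exhausting_folner {G : Type*} [Group G]
    [TopologicalSpace G] [IsTopologicalGroup G] [LocallyCompactSpace G]
    [SecondCountableTopology G] [NoncompactSpace G] [MeasurableSpace G] [BorelSpace G]
    {Y : Type*} [MeasurableSpace Y] [StandardBorelSpace Y]
    (γ : Measure Y) [IsProbabilityMeasure γ] (hna : ∀ y : Y, γ {y} = 0)
    (T : G → Y → Y) (hT : IsMPAction γ T)
    (B : ℕ → Set Y) (hBm : ∀ n, MeasurableSet (B n)) (hB : ∀ n, γ (B n) = 1 / 2)
    (hsum : ∀ K : Set G, IsCompact K →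
      (∑' n, ⨆ g ∈ K, γ (symmDiff (T g '' B n) (B n))) ≠ ∞)
    (μ : Measure (ℕ → Y))
    (hcyl : ∀ (m : ℕ) (C : ℕ → Set Y), (∀ j, MeasurableSet (C j)) →
      (∀ j, m ≤ j → C j = B j) →
      μ {x : ℕ → Y | ∀ j, x j ∈ C j} = ∏ j ∈ Finset.range m, γ (C j) / γ (B j))
    (hsupp : μ ((⋃ n, tailCylinder B n)ᶜ) = 0) :
    (∀ g : G, MeasurePreserving (fun (x : ℕ → Y) (j : ℕ) => T g (x j)) μ μ) ∧
      (∀ n, μ (tailCylinder B n) = 2 ^ n) ∧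
      μ Set.univ = ∞ ∧
      Monotone (tailCylinder B) ∧
      μ ((⋃ n, tailCylinder B n)ᶜ) = 0 ∧
      ∀ K : Set G, IsCompact K →
        Tendsto (fun n => ⨆ g ∈ K,
          μ (symmDiff ((fun (x : ℕ → Y) (j : ℕ) => T g (x j)) '' tailCylinder B n)
              (tailCylinder B n)) / μ (tailCylinder B n)) atTop (𝓝 0) := by
  classical
  obtain ⟨⟨hTm, hT1, hTmul⟩, hTpres⟩ := hT
  have hTginv : ∀ (g : G) (y : Y), T g⁻¹ (T g y) = y := fun g y => by
    rw [← hTmul, inv_mul_cancel, hT1]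
  have hTginv' : ∀ (g : G) (y : Y), T g (T g⁻¹ y) = y := fun g y => by
    rw [← hTmul, mul_inv_cancel, hT1]
  have hTgm : ∀ g : G, Measurable (T g) := fun g => hTm.comp measurable_prodMk_left
  set P : G → (ℕ → Y) → (ℕ → Y) := fun g x j => T g (x j) with hPdef
  have hPm : ∀ g, Measurable (P g) :=
    fun g => measurable_pi_lambda _ fun j => (hTgm g).comp (measurable_pi_apply j)
  have hPinv : ∀ g : G, Function.LeftInverse (P g⁻¹) (P g) :=
    fun g x => funext fun j => hTginv g (x j)
  have hPinv' : ∀ g : G, Function.RightInverse (P g⁻¹) (P g) :=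
    fun g x => funext fun j => hTginv' g (x j)
  have hPimg : ∀ (g : G) (A : Set (ℕ → Y)), P g '' A = P g⁻¹ ⁻¹' A := fun g A =>
    congrFun (Set.image_eq_preimage_of_inverse (hPinv g) (hPinv' g)) A
  have himg : ∀ (g : G) (S : Set Y), T g '' S = T g⁻¹ ⁻¹' S := fun g S =>
    congrFun (Set.image_eq_preimage_of_inverse (fun y => hTginv g y) (fun y => hTginv' g y)) S
  have hγpre : ∀ (g : G) (s : Set Y), MeasurableSet s → γ (T g ⁻¹' s) = γ s :=
    fun g s hs => (hTpres g).measure_preimage hs.nullMeasurableSet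
  have hcyl' : ∀ (m : ℕ) (C : ℕ → Set Y), (∀ j, MeasurableSet (C j)) →
      (∀ j, m ≤ j → C j = B j) →
      μ (RPaux.cylSet C) = ∏ j ∈ Finset.range m, γ (C j) / γ (B j) := hcyl
  have hμTC : ∀ n, μ (tailCylinder B n) = 2 ^ n :=
    RPaux.measure_tailCylinder γ B hB μ hcyl' hBm
  have hsumg : ∀ g : G, (∑' j, γ (B j \ T g ⁻¹' B j)) ≠ ∞ := by
    intro g
    refine ne_top_of_le_ne_top (hsum {g⁻¹} isCompact_singleton)
      (ENNReal.tsum_le_tsum fun j => ?_)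
    have h1 : B j \ T g ⁻¹' B j ⊆ symmDiff (T g⁻¹ '' B j) (B j) := by
      rw [himg g⁻¹, inv_inv]
      exact fun x hx => Set.mem_symmDiff.2 (Or.inr ⟨hx.1, hx.2⟩)
    refine (measure_mono h1).trans ?_
    exact le_iSup₂ (f := fun (g' : G) (_ : g' ∈ ({g⁻¹} : Set G)) =>
      γ (symmDiff (T g' '' B j) (B j))) g⁻¹ rfl
  have htail : ∀ g : G,
      Tendsto (fun N => ∑' k, γ (B (k + N) \ T g ⁻¹' B (k + N))) atTop (𝓝 0) :=
    fun g => ENNReal.tendsto_sum_nat_add _ (hsumg g)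
  -- `P g` preserves `μ`
  have goal1 : ∀ g : G, MeasurePreserving (P g) μ μ := by
    intro g
    refine ⟨hPm g, ?_⟩
    refine RPaux.measure_eq_of_cyl γ B hB hBm _ μ ?_ hcyl' ?_ hsupp
    · intro m C hCm hCB
      rw [Measure.map_apply (hPm g) (RPaux.cylSet_mble hCm)]
      have hpre : P g ⁻¹' RPaux.cylSet C = RPaux.cylSet (fun j => T g ⁻¹' C j) := rfl
      rw [hpre]
      rw [RPaux.tail_compute γ B hB hBm μ hcyl' hsupp _ (fun j => (hTgm g) (hCm j)) m
        (fun j hj => by rw [hCB j hj, hγpre g _ (hBm j)]; exact hB j)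
        (Filter.Tendsto.congr' (by
          filter_upwards [eventually_ge_atTop m] with N hN using
            tsum_congr fun k => by rw [hCB (k + N) (hN.trans (Nat.le_add_left _ _))])
          (htail g))]
      exact Finset.prod_congr rfl fun j _ => by rw [hγpre g _ (hCm j)]
    · rw [Measure.map_apply (hPm g)
        (MeasurableSet.iUnion fun n => RPaux.tailCylinder_mble hBm n).compl]
      have hkey : ∀ n, μ (tailCylinder B n ∩ P g ⁻¹' (⋃ n, tailCylinder B n)ᶜ) = 0 := by
        intro n
        have hbound : ∀ M, n ≤ M → μ (tailCylinder B n ∩ P g ⁻¹' (⋃ n, tailCylinder B n)ᶜ)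
            ≤ 2 ^ n * (2 * ∑' k, γ (B (k + M) \ T g ⁻¹' B (k + M))) := by
          intro M hM
          refine le_trans (measure_mono ?_)
            (RPaux.measure_tail_diff_le γ B hB hBm μ hcyl' (fun j => T g ⁻¹' B j)
              (fun j => (hTgm g) (hBm j)) n M hM)
          rintro x ⟨hx1, hx2⟩
          refine ⟨hx1, fun hx3 => ?_⟩
          exact hx2 (mem_iUnion.2 ⟨M, fun j hj => hx3 j hj⟩)
        have htendM : Tendsto
            (fun M => 2 ^ n * (2 * ∑' k, γ (B (k + M) \ T g ⁻¹' B (k + M)))) atTop (𝓝 0) := by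
          have h2 := ENNReal.Tendsto.const_mul (a := 2 ^ n * 2) (htail g)
            (Or.inr (ENNReal.mul_ne_top (ENNReal.pow_ne_top (by norm_num)) (by norm_num)))
          simpa [mul_assoc] using h2
        have hle0 := ge_of_tendsto htendM (eventually_atTop.2 ⟨n, hbound⟩)
        simpa using hle0
      have hsub : P g ⁻¹' (⋃ n, tailCylinder B n)ᶜ ⊆ (⋃ n, tailCylinder B n)ᶜ ∪
          ⋃ n, (tailCylinder B n ∩ P g ⁻¹' (⋃ n, tailCylinder B n)ᶜ) := by
        intro x hx
        by_cases hxU : x ∈ ⋃ n, tailCylinder B n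
        · obtain ⟨n, hn⟩ := mem_iUnion.1 hxU
          exact Or.inr (mem_iUnion.2 ⟨n, hn, hx⟩)
        · exact Or.inl hxU
      refine le_antisymm ?_ zero_le
      calc μ (P g ⁻¹' (⋃ n, tailCylinder B n)ᶜ)
          ≤ μ ((⋃ n, tailCylinder B n)ᶜ ∪
              ⋃ n, (tailCylinder B n ∩ P g ⁻¹' (⋃ n, tailCylinder B n)ᶜ)) := measure_mono hsub
        _ ≤ μ ((⋃ n, tailCylinder B n)ᶜ) +
              μ (⋃ n, (tailCylinder B n ∩ P g ⁻¹' (⋃ n, tailCylinder B n)ᶜ)) :=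
            measure_union_le _ _
        _ ≤ 0 + ∑' n, μ (tailCylinder B n ∩ P g ⁻¹' (⋃ n, tailCylinder B n)ᶜ) := by
            rw [hsupp]
            exact add_le_add le_rfl (measure_iUnion_le _)
        _ = 0 := by
            rw [zero_add]
            simp only [hkey]
            exact tsum_zero
  refine ⟨goal1, hμTC, ?_, RPaux.tailCylinder_mono B, hsupp, ?_⟩
  · -- infinite total measure
    rw [eq_top_iff]
    have h2 : (⊤ : ℝ≥0∞) = ⨆ n : ℕ, (2:ℝ≥0∞)^n := by
      rw [eq_comm, eq_top_iff, ← ENNReal.iSup_natCast]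
      refine iSup_le fun n => le_trans ?_ (le_iSup (fun n : ℕ => (2:ℝ≥0∞)^n) n)
      exact_mod_cast Nat.le_of_lt (Nat.lt_two_pow_self (n := n))
    rw [h2]
    exact iSup_le fun n => le_trans (le_of_eq (hμTC n).symm) (measure_mono (subset_univ _))
  · -- Følner property
    intro K hK
    have hK' : IsCompact (K ∪ K⁻¹) := hK.union hK.inv
    have hssum : (∑' j, ⨆ g ∈ K ∪ K⁻¹, γ (symmDiff (T g '' B j) (B j))) ≠ ⊤ := hsum _ hK'
    set s : ℕ → ℝ≥0∞ := fun j => ⨆ g ∈ K ∪ K⁻¹, γ (symmDiff (T g '' B j) (B j)) with hsdef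
    set τ : ℕ → ℝ≥0∞ := fun n => ∑' k, s (k + n) with hτdef
    have hτ : Tendsto τ atTop (𝓝 0) := ENNReal.tendsto_sum_nat_add _ hssum
    have hsle : ∀ h : G, h⁻¹ ∈ K ∪ K⁻¹ → ∀ j, γ (B j \ T h ⁻¹' B j) ≤ s j := by
      intro h hh j
      have h1 : B j \ T h ⁻¹' B j ⊆ symmDiff (T h⁻¹ '' B j) (B j) := by
        rw [himg h⁻¹, inv_inv]
        exact fun x hx => Set.mem_symmDiff.2 (Or.inr ⟨hx.1, hx.2⟩)
      exact (measure_mono h1).trans (le_iSup₂ (f := fun (g' : G) (_ : g' ∈ K ∪ K⁻¹) =>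
        γ (symmDiff (T g' '' B j) (B j))) h⁻¹ hh)
    have hpartτ : ∀ h : G, h⁻¹ ∈ K ∪ K⁻¹ → ∀ n,
        μ (tailCylinder B n \ P h ⁻¹' tailCylinder B n) ≤ 2 ^ n * (2 * τ n) := by
      intro h hh n
      have hb := RPaux.measure_tail_diff_le γ B hB hBm μ hcyl' (fun j => T h ⁻¹' B j)
        (fun j => (hTgm h) (hBm j)) n n le_rfl
      refine le_trans hb ?_
      exact mul_le_mul_right
        (mul_le_mul_right (ENNReal.tsum_le_tsum fun k => hsle h hh (k + n)) 2) _
    have hsym : ∀ g ∈ K, ∀ n,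
        μ (symmDiff (P g '' tailCylinder B n) (tailCylinder B n))
          ≤ 2 ^ n * (2 * τ n) + 2 ^ n * (2 * τ n) := by
      intro g hg n
      rw [hPimg g, Set.symmDiff_def]
      refine (measure_union_le _ _).trans (add_le_add ?_ ?_)
      · have hident : P g⁻¹ ⁻¹' tailCylinder B n \ tailCylinder B n
            = P g⁻¹ ⁻¹' (tailCylinder B n \ P g⁻¹ '' tailCylinder B n) := by
          ext x
          simp only [mem_diff, mem_preimage]
          rw [(Function.LeftInverse.injective (hPinv g⁻¹)).mem_set_image]
        rw [hident, hPimg g⁻¹, inv_inv,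
          (goal1 g⁻¹).measure_preimage
            (((RPaux.tailCylinder_mble hBm n).diff
              ((hPm g) (RPaux.tailCylinder_mble hBm n))).nullMeasurableSet)]
        exact hpartτ g (Or.inr (by rw [Set.mem_inv, inv_inv]; exact hg)) n
      · exact hpartτ g⁻¹ (by rw [inv_inv]; exact Or.inl hg) n
    have hub : ∀ n, (⨆ g ∈ K,
        μ (symmDiff (P g '' tailCylinder B n) (tailCylinder B n)) / μ (tailCylinder B n))
          ≤ 4 * τ n := by
      intro n
      refine iSup₂_le fun g hg => ?_
      rw [hμTC n, ENNReal.div_le_iff (pow_ne_zero _ (by norm_num))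
        (ENNReal.pow_ne_top (by norm_num))]
      refine (hsym g hg n).trans (le_of_eq ?_)
      ring
    have h4τ : Tendsto (fun n => 4 * τ n) atTop (𝓝 0) := by
      have h2 := ENNReal.Tendsto.const_mul (a := 4) hτ (Or.inr (by norm_num))
      simpa using h2
    exact tendsto_of_tendsto_of_tendsto_of_le_of_le tendsto_const_nhds h4τ
      (fun n => zero_le) hub
end
end
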